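/- arXiv:1707.01666 — 7 statements merged into one kernel-verified Lean document; each statement's English description precedes it below -/
import Mathlib

section
/- Let n₁, n₂, n₃, n be integers satisfying n = n₁ − n₂ + n₃, n₁ ≠ n, and n₃ ≠ n. Then |φ(n₁,n₂,n₃,n)| ≥ 1; in particular the phase function does not vanish on the non-resonant set. -/
/-- For integers `n₁, n₂, n₃, n` with `n = n₁ - n₂ + n₃`, `n₁ ≠ n`, and `n₃ ≠ n`,
the phase function `φ = n₁⁴ - n₂⁴ + n₃⁴ - n⁴` satisfies `|φ| ≥ 1`; in particular
it does not vanish on the non-resonant set. -/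
theorem phase_nonresonant_lower_bound (n₁ n₂ n₃ n : ℤ) (h : n = n₁ - n₂ + n₃)
    (h₁ : n₁ ≠ n) (h₃ : n₃ ≠ n) :
    1 ≤ |n₁ ^ 4 - n₂ ^ 4 + n₃ ^ 4 - n ^ 4| := by
  have ha : n₁ - n ≠ 0 := sub_ne_zero.mpr h₁
  have hc : n₃ - n ≠ 0 := sub_ne_zero.mpr h₃
  refine Int.one_le_abs ?_
  have hn2 : n₂ = n₁ + n₃ - n := by omega
  subst hn2
  set a := n₁ - n with hadef
  set c := n₃ - n with hcdef
  have hQ : 0 < 6 * n ^ 2 + 6 * n * (a + c) + 2 * a ^ 2 + 3 * a * c + 2 * c ^ 2 := by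
    have h6 : 0 < 6 * (6 * n ^ 2 + 6 * n * (a + c) + 2 * a ^ 2 + 3 * a * c + 2 * c ^ 2) := by
      have : 6 * (6 * n ^ 2 + 6 * n * (a + c) + 2 * a ^ 2 + 3 * a * c + 2 * c ^ 2)
          = (6 * n + 3 * a + 3 * c) ^ 2 + 3 * a ^ 2 + 3 * c ^ 2 := by ring
      rw [this]
      have h1 : 0 < a ^ 2 := by positivity
      have h2 : 0 < c ^ 2 := by positivity
      nlinarith [sq_nonneg (6 * n + 3 * a + 3 * c)]
    linarith
  have key : n₁ ^ 4 - (n₁ + n₃ - n) ^ 4 + n₃ ^ 4 - n ^ 4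
      = -2 * a * c * (6 * n ^ 2 + 6 * n * (a + c) + 2 * a ^ 2 + 3 * a * c + 2 * c ^ 2) := by
    rw [hadef, hcdef]; ring
  rw [key]
  have : (-2 : ℤ) * a * c ≠ 0 := by
    exact mul_ne_zero (mul_ne_zero (by norm_num) ha) hc
  exact mul_ne_zero this hQ.ne'
end

section
/- Let n₁, n₂, n₃, n be integers, not all zero, satisfying n = n₁ − n₂ + n₃, and set M = max(|n₁|, |n₂|, |n₃|, |n|). Then (1/2)·M²·|n₁² − n₂² + n₃² − n²| ≤ |φ(n₁,n₂,n₃,n)| ≤ 6·M²·|n₁² − n₂² + n₃² − n²|. -/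
/-- For integers `n₁, n₂, n₃, n`, not all zero, with `n = n₁ - n₂ + n₃`, and
`M = max(|n₁|, |n₂|, |n₃|, |n|)`, the fourth order phase `φ = n₁⁴ - n₂⁴ + n₃⁴ - n⁴`
is comparable to `M² |μ|` where `μ = n₁² - n₂² + n₃² - n²`:
`(1/2) M² |μ| ≤ |φ| ≤ 6 M² |μ|`. -/
theorem phase_comparison (n₁ n₂ n₃ n : ℤ) (h : n = n₁ - n₂ + n₃)
    (hne : ¬(n₁ = 0 ∧ n₂ = 0 ∧ n₃ = 0 ∧ n = 0)) :
    (1 / 2 : ℝ) * ((max (max |n₁| |n₂|) (max |n₃| |n|) : ℤ) : ℝ) ^ 2 *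
        |(n₁ : ℝ) ^ 2 - (n₂ : ℝ) ^ 2 + (n₃ : ℝ) ^ 2 - (n : ℝ) ^ 2| ≤
      |(n₁ : ℝ) ^ 4 - (n₂ : ℝ) ^ 4 + (n₃ : ℝ) ^ 4 - (n : ℝ) ^ 4| ∧
    |(n₁ : ℝ) ^ 4 - (n₂ : ℝ) ^ 4 + (n₃ : ℝ) ^ 4 - (n : ℝ) ^ 4| ≤
      6 * ((max (max |n₁| |n₂|) (max |n₃| |n|) : ℤ) : ℝ) ^ 2 *
        |(n₁ : ℝ) ^ 2 - (n₂ : ℝ) ^ 2 + (n₃ : ℝ) ^ 2 - (n : ℝ) ^ 2| := by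
  set φ : ℝ := (n₁ : ℝ) ^ 4 - (n₂ : ℝ) ^ 4 + (n₃ : ℝ) ^ 4 - (n : ℝ) ^ 4 with hφ
  set μ : ℝ := (n₁ : ℝ) ^ 2 - (n₂ : ℝ) ^ 2 + (n₃ : ℝ) ^ 2 - (n : ℝ) ^ 2 with hμ
  set Mz : ℤ := max (max |n₁| |n₂|) (max |n₃| |n|) with hMz
  set Mr : ℝ := (Mz : ℝ) with hMr
  set Q : ℝ := (n₁ : ℝ) ^ 2 + (n₂ : ℝ) ^ 2 + (n₃ : ℝ) ^ 2 + (n : ℝ) ^ 2 +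
      2 * ((n₁ : ℝ) + (n₃ : ℝ)) ^ 2 with hQ
  have ha1 : |(n₁ : ℝ)| ≤ Mr := by
    rw [hMr, ← Int.cast_abs]; exact_mod_cast le_max_of_le_left (le_max_left _ _)
  have ha2 : |(n₂ : ℝ)| ≤ Mr := by
    rw [hMr, ← Int.cast_abs]; exact_mod_cast le_max_of_le_left (le_max_right _ _)
  have ha3 : |(n₃ : ℝ)| ≤ Mr := by
    rw [hMr, ← Int.cast_abs]; exact_mod_cast le_max_of_le_right (le_max_left _ _)
  have ha4 : |(n : ℝ)| ≤ Mr := by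
    rw [hMr, ← Int.cast_abs]; exact_mod_cast le_max_of_le_right (le_max_right _ _)
  have hM0 : 0 ≤ Mr := le_trans (abs_nonneg _) ha1
  have hs1 : (n₁ : ℝ) ^ 2 ≤ Mr ^ 2 := by
    rw [← sq_abs]; exact pow_le_pow_left₀ (abs_nonneg _) ha1 2
  have hs2 : (n₂ : ℝ) ^ 2 ≤ Mr ^ 2 := by
    rw [← sq_abs]; exact pow_le_pow_left₀ (abs_nonneg _) ha2 2
  have hs3 : (n₃ : ℝ) ^ 2 ≤ Mr ^ 2 := by
    rw [← sq_abs]; exact pow_le_pow_left₀ (abs_nonneg _) ha3 2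
  have hs4 : (n : ℝ) ^ 2 ≤ Mr ^ 2 := by
    rw [← sq_abs]; exact pow_le_pow_left₀ (abs_nonneg _) ha4 2
  have h13 : (n₁ : ℝ) * (n₃ : ℝ) ≤ Mr * Mr := by
    calc (n₁ : ℝ) * (n₃ : ℝ) ≤ |(n₁ : ℝ) * (n₃ : ℝ)| := le_abs_self _
      _ = |(n₁ : ℝ)| * |(n₃ : ℝ)| := abs_mul _ _
      _ ≤ Mr * Mr := mul_le_mul ha1 ha3 (abs_nonneg _) hM0
  -- key identity
  have key : 2 * φ = μ * Q := by
    rw [hφ, hμ, hQ, h]; push_cast; ring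
  have hQ0 : 0 ≤ Q := by positivity
  -- lower bound on Q
  have hMQ1 : Mr ^ 2 ≤ Q := by
    have hcases : Mz = |n₁| ∨ Mz = |n₂| ∨ Mz = |n₃| ∨ Mz = |n| := by
      rcases max_choice (max |n₁| |n₂|) (max |n₃| |n|) with h' | h'
      · rcases max_choice |n₁| |n₂| with h'' | h''
        · exact Or.inl (h'.trans h'')
        · exact Or.inr (Or.inl (h'.trans h''))
      · rcases max_choice |n₃| |n| with h'' | h''
        · exact Or.inr (Or.inr (Or.inl (h'.trans h'')))
        · exact Or.inr (Or.inr (Or.inr (h'.trans h'')))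
    have hsq : ∀ m : ℤ, Mz = |m| → Mr ^ 2 = (m : ℝ) ^ 2 := by
      intro m hm; rw [hMr, hm]; push_cast [sq_abs]; ring
    rcases hcases with h' | h' | h' | h' <;>
      rw [hsq _ h', hQ] <;>
      linarith [sq_nonneg ((n₁:ℝ) + n₃), sq_nonneg (n₁:ℝ), sq_nonneg (n₂:ℝ),
        sq_nonneg (n₃:ℝ), sq_nonneg (n:ℝ)]
  -- upper bound on Q
  have hMQ2 : Q ≤ 12 * Mr ^ 2 := by
    have hexp : Q = 3 * (n₁:ℝ)^2 + (n₂:ℝ)^2 + 3 * (n₃:ℝ)^2 + (n:ℝ)^2 + 4 * ((n₁:ℝ) * n₃) := by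
      rw [hQ]; ring
    have hmm : Mr * Mr = Mr ^ 2 := (sq Mr).symm
    linarith
  -- relate |φ| and |μ|
  have habs : 2 * |φ| = |μ| * Q := by
    calc 2 * |φ| = |2 * φ| := by rw [abs_mul]; norm_num
      _ = |μ * Q| := by rw [key]
      _ = |μ| * |Q| := abs_mul _ _
      _ = |μ| * Q := by rw [abs_of_nonneg hQ0]
  have hμ0 : 0 ≤ |μ| := abs_nonneg _
  constructor
  · have := mul_le_mul_of_nonneg_left hMQ1 hμ0
    linarith
  · have := mul_le_mul_of_nonneg_left hMQ2 hμ0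
    linarith
end

section
/- Let s be a real number with 0 ≤ s ≤ 1. Then there exists a constant C > 0 such that for every integer n, the sum over all pairs of integers (n₁, n₃) with n₁ ≠ n and n₃ ≠ n of (1 + n²)^{2s} / φ(n₁, n₁ + n₃ − n, n₃, n)² is at most C. -/
lemma phase_int_key (n a b : ℤ) (ha : a ≠ 0) (hb : b ≠ 0) :
    2 * (1 + n ^ 2) ≤ 3 * (3 * (2 * n + a + b) ^ 2 + a ^ 2 + b ^ 2) := by
  have ha1 : 1 ≤ a ^ 2 := by
    have := pow_two_pos_of_ne_zero ha
    omega
  have hb1 : 1 ≤ b ^ 2 := by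
    have := pow_two_pos_of_ne_zero hb
    omega
  nlinarith [sq_nonneg (2 * n + a + b + (a + b)), sq_nonneg (a - b), sq_nonneg (a + b),
    sq_nonneg (2 * n + a + b)]

lemma phase_point_bound (s : ℝ) (hs₁ : s ≤ 1) (n a b : ℤ) (ha : a ≠ 0) (hb : b ≠ 0) :
    (1 + (n : ℝ) ^ 2) ^ (2 * s) /
      (((-(a * b * (3 * (2 * n + a + b) ^ 2 + a ^ 2 + b ^ 2)) : ℤ) : ℝ)) ^ 2
      ≤ 9 / 4 * (1 / (a : ℝ) ^ 2 * (1 / (b : ℝ) ^ 2)) := by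
  have ha1 : (1 : ℝ) ≤ (a : ℝ) ^ 2 := by
    have : (1 : ℤ) ≤ a ^ 2 := by
      have := pow_two_pos_of_ne_zero ha; omega
    exact_mod_cast this
  have hb1 : (1 : ℝ) ≤ (b : ℝ) ^ 2 := by
    have : (1 : ℤ) ≤ b ^ 2 := by
      have := pow_two_pos_of_ne_zero hb; omega
    exact_mod_cast this
  have hT : 2 * (1 + (n : ℝ) ^ 2) ≤ 3 * (3 * (2 * n + a + b) ^ 2 + (a:ℝ) ^ 2 + (b:ℝ) ^ 2) := by
    exact_mod_cast phase_int_key n a b ha hb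
  set T : ℝ := 3 * (2 * (n:ℝ) + a + b) ^ 2 + (a:ℝ) ^ 2 + (b:ℝ) ^ 2 with hTdef
  have hn0 : (0 : ℝ) ≤ 1 + (n : ℝ) ^ 2 := by positivity
  have hTpos : 0 < T := by nlinarith
  have hw : (1 + (n : ℝ) ^ 2) ^ (2 * s) ≤ (1 + (n : ℝ) ^ 2) ^ 2 := by
    have h2 : (1 + (n : ℝ) ^ 2) ^ (2 * s) ≤ (1 + (n : ℝ) ^ 2) ^ ((2 : ℕ) : ℝ) :=
      Real.rpow_le_rpow_of_exponent_le (by nlinarith) (by push_cast; linarith)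
    rwa [Real.rpow_natCast] at h2
  have hden : (((-(a * b * (3 * (2 * n + a + b) ^ 2 + a ^ 2 + b ^ 2)) : ℤ) : ℝ)) ^ 2
      = (a : ℝ) ^ 2 * (b : ℝ) ^ 2 * T ^ 2 := by
    push_cast
    ring
  rw [hden]
  have hABT : (0 : ℝ) < (a : ℝ) ^ 2 * (b : ℝ) ^ 2 * T ^ 2 := by positivity
  rw [div_le_iff₀ hABT]
  have hrhs : 9 / 4 * (1 / (a : ℝ) ^ 2 * (1 / (b : ℝ) ^ 2)) * ((a:ℝ) ^ 2 * (b:ℝ) ^ 2 * T ^ 2)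
      = 9 / 4 * T ^ 2 := by
    field_simp
  rw [hrhs]
  nlinarith [hw, hT, hn0, hTpos.le]

lemma phase_g0_summable :
    Summable (fun p : ℤ × ℤ => 9 / 4 * (1 / (p.1 : ℝ) ^ 2 * (1 / (p.2 : ℝ) ^ 2))) := by
  have h : Summable (fun k : ℤ => 1 / (k : ℝ) ^ 2) :=
    Real.summable_one_div_int_pow.mpr one_lt_two
  exact (h.mul_of_nonneg h (fun k => by positivity) (fun k => by positivity)).mul_left _

lemma phase_gn_summable (n : ℤ) :
    Summable (fun p : ℤ × ℤ =>
      9 / 4 * (1 / ((p.1 - n : ℤ) : ℝ) ^ 2 * (1 / ((p.2 - n : ℤ) : ℝ) ^ 2))) := by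
  have := phase_g0_summable.comp_injective
    (((Equiv.subRight n).prodCongr (Equiv.subRight n)).injective)
  exact this

lemma phase_gn_tsum (n : ℤ) :
    (∑' p : ℤ × ℤ, 9 / 4 * (1 / ((p.1 - n : ℤ) : ℝ) ^ 2 * (1 / ((p.2 - n : ℤ) : ℝ) ^ 2)))
      = ∑' p : ℤ × ℤ, 9 / 4 * (1 / (p.1 : ℝ) ^ 2 * (1 / (p.2 : ℝ) ^ 2)) :=
  Equiv.tsum_eq ((Equiv.subRight n).prodCongr (Equiv.subRight n))
    (fun p : ℤ × ℤ => 9 / 4 * (1 / (p.1 : ℝ) ^ 2 * (1 / (p.2 : ℝ) ^ 2)))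

/-- For `0 ≤ s ≤ 1` there is a constant `C > 0` such that for every `n : ℤ`, the sum
over all pairs `(n₁, n₃)` with `n₁ ≠ n`, `n₃ ≠ n` (and `n₂ := n₁ + n₃ - n`) of
`⟨n⟩^{4s} / φ(n₁,n₂,n₃,n)²` is at most `C`. -/
theorem phase_weighted_sum_bound (s : ℝ) (hs₀ : 0 ≤ s) (hs₁ : s ≤ 1) :
    ∃ C : ℝ, 0 < C ∧ ∀ n : ℤ,
      (∑' p : ℤ × ℤ,
        if p.1 ≠ n ∧ p.2 ≠ n then
          (1 + (n : ℝ) ^ 2) ^ (2 * s) /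
            (((p.1 ^ 4 - (p.1 + p.2 - n) ^ 4 + p.2 ^ 4 - n ^ 4 : ℤ) : ℝ)) ^ 2
        else 0) ≤ C := by
  set C0 : ℝ := ∑' p : ℤ × ℤ, 9 / 4 * (1 / (p.1 : ℝ) ^ 2 * (1 / (p.2 : ℝ) ^ 2)) with hC0
  have hC0nn : 0 ≤ C0 := tsum_nonneg (fun p => by positivity)
  refine ⟨C0 + 1, by linarith, fun n => ?_⟩
  set g : ℤ × ℤ → ℝ :=
    fun p => 9 / 4 * (1 / ((p.1 - n : ℤ) : ℝ) ^ 2 * (1 / ((p.2 - n : ℤ) : ℝ) ^ 2)) with hg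
  set f : ℤ × ℤ → ℝ :=
    fun p => if p.1 ≠ n ∧ p.2 ≠ n then
        (1 + (n : ℝ) ^ 2) ^ (2 * s) /
          (((p.1 ^ 4 - (p.1 + p.2 - n) ^ 4 + p.2 ^ 4 - n ^ 4 : ℤ) : ℝ)) ^ 2
      else 0 with hf
  have hgsum : Summable g := phase_gn_summable n
  have hfg : ∀ p, f p ≤ g p := by
    intro p
    simp only [hf, hg]
    split_ifs with h
    · obtain ⟨h1, h2⟩ := h
      have key : (p.1 ^ 4 - (p.1 + p.2 - n) ^ 4 + p.2 ^ 4 - n ^ 4 : ℤ)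
          = -((p.1 - n) * ((p.2 - n)) *
              (3 * (2 * n + (p.1 - n) + (p.2 - n)) ^ 2 + (p.1 - n) ^ 2 + (p.2 - n) ^ 2)) := by
        ring
      rw [key]
      exact phase_point_bound s hs₁ n (p.1 - n) (p.2 - n)
        (sub_ne_zero.mpr h1) (sub_ne_zero.mpr h2)
    · positivity
  have hfnn : ∀ p, 0 ≤ f p := by
    intro p
    simp only [hf]
    split_ifs with h
    · positivity
    · exact le_rfl
  have hfsum : Summable f := Summable.of_nonneg_of_le hfnn hfg hgsum
  have htsum : ∑' p, f p ≤ ∑' p, g p := Summable.tsum_le_tsum hfg hfsum hgsum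
  have hgC0 : ∑' p, g p = C0 := phase_gn_tsum n
  calc ∑' p, f p ≤ ∑' p, g p := htsum
    _ = C0 := hgC0
    _ ≤ C0 + 1 := by linarith
end

section
/- For every δ > 0 there exists a constant C = C(δ) > 0 such that for every integer n and every nonzero integer m, the number of pairs of integers (n₁, n₃) with n₁ ≠ n, n₃ ≠ n, and φ(n₁, n₁ + n₃ − n, n₃, n) = m is at most C·|m|^δ. -/
open Real Finset

/-- Per-prime factor bound, general case. -/
lemma aux_factor_bound (ε : ℝ) (hε : 0 < ε) (p e : ℕ) (hp : 2 ≤ p) :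
    ((e : ℝ) + 1) ≤ (1 + 1 / ((2:ℝ) ^ ε - 1)) * ((p : ℝ) ^ e) ^ ε := by
  have h2 : (1:ℝ) < (2:ℝ) ^ ε := by
    have := Real.one_lt_rpow_iff_of_pos (x := 2) (by norm_num) (y := ε)
    rw [this]; left; exact ⟨by norm_num, hε⟩
  set t : ℝ := (2:ℝ) ^ ε with ht
  have htpos : 0 < t - 1 := by linarith
  have hB : ((e : ℝ) + 1) ≤ (1 + 1 / (t - 1)) * t ^ e := by
    have hbern : 1 + (e : ℝ) * (t - 1) ≤ (1 + (t - 1)) ^ e :=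
      one_add_mul_le_pow (by nlinarith) e
    have h1t : (1 : ℝ) + (t - 1) = t := by ring
    rw [h1t] at hbern
    have hte : (1:ℝ) ≤ t ^ e := one_le_pow₀ (by linarith)
    have heq : (1 + 1 / (t - 1)) * t ^ e = (t * t ^ e) / (t - 1) := by
      field_simp
      ring
    rw [heq, le_div_iff₀ htpos]
    nlinarith [hbern, hte, mul_nonneg (by linarith : (0:ℝ) ≤ t - 1)
      (by linarith : (0:ℝ) ≤ t ^ e - 1)]
  calc ((e : ℝ) + 1) ≤ (1 + 1 / (t - 1)) * t ^ e := hB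
    _ ≤ (1 + 1 / (t - 1)) * ((p : ℝ) ^ e) ^ ε := by
        have h1t : (0:ℝ) < 1 / (t - 1) := one_div_pos.mpr htpos
        apply mul_le_mul_of_nonneg_left _ (by linarith)
        have : ((p : ℝ) ^ e) ^ ε = ((p:ℝ) ^ ε) ^ e := by
          rw [← Real.rpow_natCast (p:ℝ) e, ← Real.rpow_mul (by positivity),
            mul_comm, Real.rpow_mul (by positivity), Real.rpow_natCast]
        rw [this]
        apply pow_le_pow_left₀ (by positivity)
        apply Real.rpow_le_rpow (by norm_num) (by exact_mod_cast hp) hε.le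

/-- Per-prime factor bound, large prime case. -/
lemma aux_factor_bound_large (ε : ℝ) (hε : 0 < ε) (p e : ℕ)
    (hp : (2:ℝ) ^ (1/ε) ≤ (p : ℝ)) :
    ((e : ℝ) + 1) ≤ ((p : ℝ) ^ e) ^ ε := by
  have hppos : (0:ℝ) < (p:ℝ) := lt_of_lt_of_le (by positivity) hp
  have h2 : (2:ℝ) ≤ (p:ℝ) ^ ε := by
    have := Real.rpow_le_rpow (by positivity) hp hε.le
    rwa [← Real.rpow_mul (by norm_num), one_div_mul_cancel hε.ne', Real.rpow_one] at this
  have : ((p : ℝ) ^ e) ^ ε = ((p:ℝ) ^ ε) ^ e := by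
    rw [← Real.rpow_natCast (p:ℝ) e, ← Real.rpow_mul hppos.le,
      mul_comm, Real.rpow_mul hppos.le, Real.rpow_natCast]
  rw [this]
  calc ((e:ℝ) + 1) ≤ (2:ℝ) ^ e := by
        exact_mod_cast Nat.succ_le_of_lt (Nat.lt_two_pow_self (n := e))
    _ ≤ ((p:ℝ) ^ ε) ^ e := pow_le_pow_left₀ (by norm_num) h2 e

/-- Divisor bound: `d(k) ≤ C k^ε`. -/
lemma divisor_bound (ε : ℝ) (hε : 0 < ε) :
    ∃ C : ℝ, 0 < C ∧ ∀ k : ℕ, k ≠ 0 → (k.divisors.card : ℝ) ≤ C * (k : ℝ) ^ ε := by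
  have h2 : (1:ℝ) < (2:ℝ) ^ ε := by
    rw [Real.one_lt_rpow_iff_of_pos (by norm_num)]; left; exact ⟨by norm_num, hε⟩
  set B : ℝ := 1 + 1 / ((2:ℝ) ^ ε - 1) with hBdef
  have hB1 : 1 ≤ B := by
    have : (0:ℝ) < 1 / ((2:ℝ) ^ ε - 1) := one_div_pos.mpr (by linarith)
    rw [hBdef]; linarith
  set N : ℕ := ⌈(2:ℝ) ^ (1/ε)⌉₊ with hN
  refine ⟨B ^ N, pow_pos (by linarith) N, fun k hk => ?_⟩
  have hcard : (k.divisors.card : ℝ)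
      = ∏ p ∈ k.primeFactors, ((k.factorization p : ℝ) + 1) := by
    rw [Nat.card_divisors hk]; push_cast; rfl
  have hself : (k : ℝ) = ∏ p ∈ k.primeFactors, ((p:ℝ) ^ (k.factorization p)) := by
    conv_lhs => rw [← Nat.factorization_prod_pow_eq_self hk]
    push_cast [Finsupp.prod]
    rfl
  have hrpow : (k : ℝ) ^ ε
      = ∏ p ∈ k.primeFactors, (((p:ℝ) ^ (k.factorization p)) ^ ε) := by
    rw [hself, ← Real.finset_prod_rpow _ _ (fun i _ => by positivity)]
  rw [hcard, hrpow]
  calc (∏ p ∈ k.primeFactors, ((k.factorization p : ℝ) + 1))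
      ≤ ∏ p ∈ k.primeFactors,
          ((if p ≤ N then B else 1) * ((p:ℝ) ^ (k.factorization p)) ^ ε) := by
        apply Finset.prod_le_prod (fun i _ => by positivity)
        intro p hp
        have hpp : p.Prime := Nat.prime_of_mem_primeFactors hp
        by_cases hle : p ≤ N
        · simp only [if_pos hle]
          exact aux_factor_bound ε hε p _ hpp.two_le
        · simp only [if_neg hle, one_mul]
          apply aux_factor_bound_large ε hε
          have : (N:ℝ) ≤ (p:ℝ) := by exact_mod_cast (not_le.mp hle).le
          exact le_trans (Nat.le_ceil _) this
    _ = (∏ p ∈ k.primeFactors, (if p ≤ N then B else 1))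
        * ∏ p ∈ k.primeFactors, ((p:ℝ) ^ (k.factorization p)) ^ ε := by
        rw [← Finset.prod_mul_distrib]
    _ ≤ B ^ N * ∏ p ∈ k.primeFactors, ((p:ℝ) ^ (k.factorization p)) ^ ε := by
        apply mul_le_mul_of_nonneg_right _
          (Finset.prod_nonneg fun i _ => by positivity)
        rw [← Finset.prod_filter]
        rw [Finset.prod_const]
        apply pow_le_pow_right₀ hB1
        calc (Finset.filter (· ≤ N) k.primeFactors).card
            ≤ (Finset.Icc 2 N).card := by
              apply Finset.card_le_card
              intro p hp
              simp only [Finset.mem_filter] at hp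
              exact Finset.mem_Icc.mpr
                ⟨(Nat.prime_of_mem_primeFactors hp.1).two_le, hp.2⟩
          _ ≤ N := by rw [Nat.card_Icc]; omega

/-- Divisor counting bound: for every `δ > 0` there is `C > 0` such that for all
`n m : ℤ` with `m ≠ 0`, the number of pairs `(n₁, n₃)` with `n₁ ≠ n`, `n₃ ≠ n`, and
`φ(n₁, n₁ + n₃ - n, n₃, n) = m` is at most `C |m|^δ`. -/
theorem phase_level_set_count (δ : ℝ) (hδ : 0 < δ) :
    ∃ C : ℝ, 0 < C ∧ ∀ n m : ℤ, m ≠ 0 →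
      (Set.ncard {p : ℤ × ℤ | p.1 ≠ n ∧ p.2 ≠ n ∧
          p.1 ^ 4 - (p.1 + p.2 - n) ^ 4 + p.2 ^ 4 - n ^ 4 = m} : ℝ) ≤
        C * |(m : ℝ)| ^ δ := by
  obtain ⟨C', hC', hbound⟩ := divisor_bound (δ/2) (by linarith)
  refine ⟨4 * C' ^ 2, by positivity, fun n m hm => ?_⟩
  set k : ℕ := m.natAbs with hk
  have hk0 : k ≠ 0 := Int.natAbs_ne_zero.mpr hm
  set d : ℕ := k.divisors.card with hd
  -- the finset of (positive and negative) integer divisors of m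
  set T : Finset ℤ := k.divisors.image (fun a : ℕ => (a:ℤ)) ∪
      k.divisors.image (fun a : ℕ => -(a:ℤ)) with hT
  have hmemT : ∀ a : ℤ, a ∣ m → a ∈ T := by
    intro a ha
    have h1 : a.natAbs ∈ k.divisors :=
      Nat.mem_divisors.mpr ⟨Int.natAbs_dvd_natAbs.mpr ha, hk0⟩
    rcases Int.natAbs_eq a with h | h
    · exact Finset.mem_union_left _ (Finset.mem_image.mpr ⟨a.natAbs, h1, h.symm⟩)
    · exact Finset.mem_union_right _ (Finset.mem_image.mpr ⟨a.natAbs, h1, h.symm⟩)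
  set F : Finset (ℤ × ℤ) := (T ×ˢ T).image (fun q => (q.1 + n, q.2 + n)) with hF
  have hsub : {p : ℤ × ℤ | p.1 ≠ n ∧ p.2 ≠ n ∧
      p.1 ^ 4 - (p.1 + p.2 - n) ^ 4 + p.2 ^ 4 - n ^ 4 = m} ⊆ (F : Set (ℤ × ℤ)) := by
    rintro ⟨x, y⟩ ⟨hx, hy, h⟩
    have hax : (x - n) ∣ m :=
      ⟨(n - y) * (x ^ 2 + (x + y - n) ^ 2 + y ^ 2 + n ^ 2 + 2 * (x + y) ^ 2),
        by linear_combination -h⟩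
    have hay : (y - n) ∣ m :=
      ⟨(n - x) * (x ^ 2 + (x + y - n) ^ 2 + y ^ 2 + n ^ 2 + 2 * (x + y) ^ 2),
        by linear_combination -h⟩
    apply Finset.mem_coe.mpr
    rw [hF]
    apply Finset.mem_image.mpr
    exact ⟨(x - n, y - n), Finset.mem_product.mpr ⟨hmemT _ hax, hmemT _ hay⟩,
      by simp⟩
  have hTcard : T.card ≤ 2 * d := by
    calc T.card ≤ (k.divisors.image (fun a : ℕ => (a:ℤ))).card
        + (k.divisors.image (fun a : ℕ => -(a:ℤ))).card := Finset.card_union_le _ _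
      _ ≤ d + d := add_le_add (Finset.card_image_le) (Finset.card_image_le)
      _ = 2 * d := by ring
  have hncard : (Set.ncard {p : ℤ × ℤ | p.1 ≠ n ∧ p.2 ≠ n ∧
      p.1 ^ 4 - (p.1 + p.2 - n) ^ 4 + p.2 ^ 4 - n ^ 4 = m}) ≤ (2 * d) * (2 * d) := by
    calc Set.ncard _ ≤ Set.ncard (F : Set (ℤ × ℤ)) :=
          Set.ncard_le_ncard hsub (Finset.finite_toSet F)
      _ = F.card := Set.ncard_coe_finset F
      _ ≤ (T ×ˢ T).card := Finset.card_image_le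
      _ = T.card * T.card := Finset.card_product T T
      _ ≤ (2 * d) * (2 * d) := Nat.mul_le_mul hTcard hTcard
  have habs : |(m : ℝ)| = (k : ℝ) := by
    rw [hk, Nat.cast_natAbs]; push_cast; rfl
  have hdb : (d : ℝ) ≤ C' * (k : ℝ) ^ (δ/2) := hbound k hk0
  have hkpos : (0:ℝ) < (k:ℝ) := by exact_mod_cast Nat.pos_of_ne_zero hk0
  have hsq : ((k:ℝ) ^ (δ/2)) * ((k:ℝ) ^ (δ/2)) = (k:ℝ) ^ δ := by
    rw [← Real.rpow_add hkpos]; norm_num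
  calc (Set.ncard {p : ℤ × ℤ | p.1 ≠ n ∧ p.2 ≠ n ∧
        p.1 ^ 4 - (p.1 + p.2 - n) ^ 4 + p.2 ^ 4 - n ^ 4 = m} : ℝ)
      ≤ ((2 * d) * (2 * d) : ℕ) := by exact_mod_cast hncard
    _ = 4 * (d:ℝ) * (d:ℝ) := by push_cast; ring
    _ ≤ 4 * (C' * (k : ℝ) ^ (δ/2)) * (C' * (k : ℝ) ^ (δ/2)) := by
        have hd0 : (0:ℝ) ≤ (d:ℝ) := by positivity
        nlinarith [hdb, hd0, Real.rpow_nonneg hkpos.le (δ/2), hC'.le]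
    _ = 4 * C' ^ 2 * (((k:ℝ) ^ (δ/2)) * ((k:ℝ) ^ (δ/2))) := by ring
    _ = 4 * C' ^ 2 * |(m:ℝ)| ^ δ := by rw [hsq, habs]
end

section
/- Let s be a real number with 0 < s < 1. Then there exists a constant C > 0 such that for every integer n, the sum over all pairs of integers (n₁, n₃) with n₁ ≠ n and n₃ ≠ n of the quantity [(1 + n²)^{2s} / φ(n₁, n₁+n₃−n, n₃, n)²] multiplied by the cardinality of the set {(m₁, m₃) ∈ ℤ² : m₁ ≠ n₁, m₃ ≠ n₁, and |φ(n₁, n₁+n₃−n, n₃, n) + φ(m₁, m₁+m₃−n₁, m₃, n₁)| ≤ 216} is at most C. -/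
open Real Finset


/-- Divisor count grows slower than any power. -/
lemma divisor_count_rpow_bound (ε : ℝ) (hε : 0 < ε) :
    ∃ C : ℝ, 1 ≤ C ∧ ∀ j : ℕ, j ≠ 0 → (j.divisors.card : ℝ) ≤ C * (j : ℝ) ^ ε := by
  have hlog2 : (0:ℝ) < Real.log 2 := Real.log_pos (by norm_num)
  set K : ℝ := max 1 (1 / (ε * Real.log 2)) with hK
  have hK1 : 1 ≤ K := le_max_left _ _
  set B : ℕ := ⌈(2:ℝ) ^ (1/ε)⌉₊ with hB
  refine ⟨K ^ (B + 1), one_le_pow₀ hK1, fun j hj => ?_⟩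
  -- key per-prime bound
  have key : ∀ p ∈ j.primeFactors,
      ((j.factorization p + 1 : ℕ) : ℝ) ≤
        (if p ≤ B then K else 1) * ((p:ℝ) ^ (j.factorization p : ℕ)) ^ ε := by
    intro p hp
    have hpp : p.Prime := Nat.prime_of_mem_primeFactors hp
    have hp2 : (2:ℝ) ≤ (p:ℝ) := by exact_mod_cast hpp.two_le
    have hp0 : (0:ℝ) < (p:ℝ) := by linarith
    set α : ℕ := j.factorization p with hα
    rw [← Real.rpow_natCast ((p:ℝ)) α, ← Real.rpow_mul hp0.le]
    by_cases hsmall : p ≤ B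
    · rw [if_pos hsmall]
      have h1 : (2:ℝ) ^ ((α:ℝ) * ε) ≤ (p:ℝ) ^ ((α:ℝ) * ε) := by
        apply Real.rpow_le_rpow (by norm_num) hp2 (by positivity)
      have h2 : 1 + (α:ℝ) * ε * Real.log 2 ≤ (2:ℝ) ^ ((α:ℝ) * ε) := by
        rw [Real.rpow_def_of_pos (by norm_num)]
        calc 1 + (α:ℝ) * ε * Real.log 2 = 1 + ((α:ℝ) * ε * Real.log 2) := by ring
        _ ≤ Real.exp ((α:ℝ) * ε * Real.log 2) := by
              have := Real.add_one_le_exp ((α:ℝ) * ε * Real.log 2)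
              linarith
        _ = Real.exp (Real.log 2 * ((α:ℝ) * ε)) := by ring_nf
      have hKe : 1 ≤ K * (ε * Real.log 2) := by
        have : 1 / (ε * Real.log 2) ≤ K := le_max_right _ _
        have h0 : 0 < ε * Real.log 2 := by positivity
        rw [div_le_iff₀ h0] at this
        linarith
      calc ((α + 1 : ℕ) : ℝ) = (α:ℝ) + 1 := by push_cast; ring
      _ ≤ K * (1 + (α:ℝ) * ε * Real.log 2) := by
            have : (α:ℝ) * 1 ≤ (α:ℝ) * (K * (ε * Real.log 2)) := by
              apply mul_le_mul_of_nonneg_left _ (by positivity)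
              linarith
            nlinarith [Nat.cast_nonneg (α := ℝ) α]
      _ ≤ K * ((p:ℝ) ^ ((α:ℝ) * ε)) := by
            apply mul_le_mul_of_nonneg_left (le_trans h2 h1) (by linarith)
      _ = K * (p:ℝ) ^ ((α:ℝ) * ε) := rfl
    · rw [if_neg hsmall, one_mul]
      -- p > B so (p:ℝ) ≥ 2^(1/ε), hence p^ε ≥ 2
      have hpB : (2:ℝ) ^ (1/ε) ≤ (p:ℝ) := by
        have : B < p := Nat.lt_of_not_le hsmall
        calc (2:ℝ) ^ (1/ε) ≤ (B:ℝ) := Nat.le_ceil _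
        _ ≤ (p:ℝ) := by exact_mod_cast this.le
      have hp_eps : (2:ℝ) ≤ (p:ℝ) ^ ε := by
        calc (2:ℝ) = ((2:ℝ) ^ (1/ε)) ^ ε := by
              rw [← Real.rpow_mul (by norm_num), one_div_mul_cancel hε.ne', Real.rpow_one]
        _ ≤ (p:ℝ) ^ ε := Real.rpow_le_rpow (by positivity) hpB hε.le
      have h2a : ((α + 1 : ℕ) : ℝ) ≤ (2:ℝ) ^ (α : ℕ) := by
        have := Nat.lt_two_pow_self (n := α)
        exact_mod_cast Nat.succ_le_of_lt this
      calc ((α + 1 : ℕ) : ℝ) ≤ (2:ℝ) ^ (α:ℕ) := h2a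
      _ ≤ ((p:ℝ) ^ ε) ^ (α:ℕ) := by
            apply pow_le_pow_left₀ (by norm_num) hp_eps
      _ = (p:ℝ) ^ (ε * (α:ℕ)) := by
            rw [← Real.rpow_natCast ((p:ℝ) ^ ε) α, ← Real.rpow_mul (by positivity)]
      _ = (p:ℝ) ^ ((α:ℝ) * ε) := by rw [mul_comm]
  have hcard : (j.divisors.card : ℝ) = ∏ p ∈ j.primeFactors, ((j.factorization p + 1 : ℕ) : ℝ) := by
    rw [Nat.card_divisors hj]
    push_cast
    rfl
  have hrpow : (j:ℝ) ^ ε = ∏ p ∈ j.primeFactors, ((p:ℝ) ^ (j.factorization p : ℕ)) ^ ε := by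
    rw [Real.finset_prod_rpow _ _ (fun i _ => by positivity) ε]
    congr 1
    have := Nat.factorization_prod_pow_eq_self hj
    calc (j:ℝ) = ((j.primeFactors.prod fun p => p ^ j.factorization p : ℕ) : ℝ) := by
          conv_lhs => rw [← this]
          rfl
    _ = ∏ p ∈ j.primeFactors, ((p:ℝ) ^ (j.factorization p : ℕ)) := by push_cast; rfl
  rw [hcard]
  have step1 : ∏ p ∈ j.primeFactors, ((j.factorization p + 1 : ℕ) : ℝ) ≤
      ∏ p ∈ j.primeFactors, ((if p ≤ B then K else 1) * ((p:ℝ) ^ (j.factorization p : ℕ)) ^ ε) :=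
    Finset.prod_le_prod (fun i _ => by positivity) key
  have step2 : ∏ p ∈ j.primeFactors, ((if p ≤ B then K else 1) * ((p:ℝ) ^ (j.factorization p : ℕ)) ^ ε)
      = (∏ p ∈ j.primeFactors, (if p ≤ B then K else 1)) * (j:ℝ) ^ ε := by
    rw [Finset.prod_mul_distrib, hrpow]
  have step3 : (∏ p ∈ j.primeFactors, (if p ≤ B then K else 1)) ≤ K ^ (B + 1) := by
    calc (∏ p ∈ j.primeFactors, (if p ≤ B then K else 1))
        = ∏ p ∈ j.primeFactors.filter (· ≤ B), K := by
          rw [Finset.prod_filter]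
    _ = K ^ (j.primeFactors.filter (· ≤ B)).card := by rw [Finset.prod_const]
    _ ≤ K ^ (B + 1) := by
        apply pow_le_pow_right₀ hK1
        have : j.primeFactors.filter (· ≤ B) ⊆ Finset.Iic B := by
          intro x hx
          simp only [Finset.mem_filter] at hx
          exact Finset.mem_Iic.mpr hx.2
        calc (j.primeFactors.filter (· ≤ B)).card ≤ (Finset.Iic B).card :=
              Finset.card_le_card this
        _ = B + 1 := Nat.card_Iic B
  calc ∏ p ∈ j.primeFactors, ((j.factorization p + 1 : ℕ) : ℝ)
      ≤ (∏ p ∈ j.primeFactors, (if p ≤ B then K else 1)) * (j:ℝ) ^ ε := by rw [← step2]; exact step1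
  _ ≤ K ^ (B + 1) * (j:ℝ) ^ ε := by
      apply mul_le_mul_of_nonneg_right step3 (by positivity)


/-- The key counting bound for the inner nearly-resonant set. -/
lemma inner_card_le (Cd ε : ℝ) (hCd : 1 ≤ Cd) (hε : 0 ≤ ε)
    (hdiv : ∀ j : ℕ, j ≠ 0 → (j.divisors.card : ℝ) ≤ Cd * (j : ℝ) ^ ε)
    (n₁ A : ℤ) :
    (Set.ncard {q : ℤ × ℤ | q.1 ≠ n₁ ∧ q.2 ≠ n₁ ∧
        |A + (q.1 ^ 4 - (q.1 + q.2 - n₁) ^ 4 + q.2 ^ 4 - n₁ ^ 4)| ≤ 216} : ℝ)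
      ≤ 3464 * Cd * (|(A:ℝ)| + 216) ^ ε := by
  classical
  set S : Set (ℤ × ℤ) := {q : ℤ × ℤ | q.1 ≠ n₁ ∧ q.2 ≠ n₁ ∧
        |A + (q.1 ^ 4 - (q.1 + q.2 - n₁) ^ 4 + q.2 ^ 4 - n₁ ^ 4)| ≤ 216} with hS
  -- the encoding data
  set eF : ℤ × ℤ → ℤ := fun q => (q.1 - n₁) * (q.2 - n₁) with heF
  set wF : ℤ × ℤ → ℤ := fun q => 2 * ((q.1 - n₁) + (q.2 - n₁)) + 3 * n₁ with hwF
  set mF : ℤ × ℤ → ℤ := fun q => eF q * ((wF q) ^ 2 + 3 * n₁ ^ 2 - 2 * eF q) with hmF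
  have hm_phi : ∀ q : ℤ × ℤ,
      mF q = -(q.1 ^ 4 - (q.1 + q.2 - n₁) ^ 4 + q.2 ^ 4 - n₁ ^ 4) := by
    intro q; simp only [hmF, heF, hwF]; ring
  -- positivity of the second factor
  have hX_pos : ∀ q ∈ S, 0 < (wF q) ^ 2 + 3 * n₁ ^ 2 - 2 * eF q := by
    intro q hq
    obtain ⟨h1, h2, _⟩ := hq
    have hc : q.1 - n₁ ≠ 0 := sub_ne_zero.mpr h1
    have hd : q.2 - n₁ ≠ 0 := sub_ne_zero.mpr h2
    have hid : (wF q) ^ 2 + 3 * n₁ ^ 2 - 2 * eF q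
        = 3 * (2 * n₁ + (q.1 - n₁) + (q.2 - n₁)) ^ 2 + (q.1 - n₁) ^ 2 + (q.2 - n₁) ^ 2 := by
      simp only [hwF, heF]; ring
    rw [hid]
    have := sq_nonneg (2 * n₁ + (q.1 - n₁) + (q.2 - n₁))
    have h1' : 0 < (q.1 - n₁) ^ 2 := by positivity
    have h2' : 0 < (q.2 - n₁) ^ 2 := by positivity
    linarith
  have he_ne : ∀ q ∈ S, eF q ≠ 0 := by
    intro q hq
    obtain ⟨h1, h2, _⟩ := hq
    exact mul_ne_zero (sub_ne_zero.mpr h1) (sub_ne_zero.mpr h2)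
  have hm_ne : ∀ q ∈ S, mF q ≠ 0 := by
    intro q hq
    exact mul_ne_zero (he_ne q hq) (hX_pos q hq).ne'
  -- target finset
  set D : ℤ → Finset (ℤ × ℤ) := fun m =>
    ((m.natAbs.divisors).image fun k : ℕ => (m, (k:ℤ))) ∪
    ((m.natAbs.divisors).image fun k : ℕ => (m, -(k:ℤ))) with hD
  set T : Finset ((ℤ × ℤ) × Bool × Bool) :=
    ((Finset.Icc (A - 216) (A + 216)).biUnion D) ×ˢ (Finset.univ : Finset (Bool × Bool)) with hT
  set Φ : ℤ × ℤ → (ℤ × ℤ) × Bool × Bool :=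
    fun q => ((mF q, eF q), (decide (0 ≤ wF q), decide (q.1 ≤ q.2))) with hΦ
  have hmaps : ∀ q ∈ S, Φ q ∈ (T : Set ((ℤ × ℤ) × Bool × Bool)) := by
    intro q hq
    obtain ⟨h1, h2, h3⟩ := hq
    have hmIcc : mF q ∈ Finset.Icc (A - 216) (A + 216) := by
      rw [Finset.mem_Icc]
      rw [hm_phi q]
      rw [abs_le] at h3
      omega
    have hdvd : (eF q).natAbs ∈ (mF q).natAbs.divisors := by
      rw [Nat.mem_divisors]
      constructor
      · exact Int.natAbs_dvd_natAbs.mpr ⟨_, rfl⟩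
      · exact Int.natAbs_ne_zero.mpr (hm_ne q ⟨h1, h2, h3⟩)
    have hme : (mF q, eF q) ∈ D (mF q) := by
      rw [hD]
      rcases le_or_gt 0 (eF q) with he | he
      · apply Finset.mem_union_left
        refine Finset.mem_image.mpr ⟨(eF q).natAbs, ?_, ?_⟩
        · exact hdvd
        · rw [Int.natAbs_of_nonneg he]
      · apply Finset.mem_union_right
        refine Finset.mem_image.mpr ⟨(eF q).natAbs, ?_, ?_⟩
        · exact hdvd
        · rw [Int.ofNat_natAbs_of_nonpos he.le, neg_neg]
    rw [Finset.mem_coe, hT, Finset.mem_product]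
    refine ⟨Finset.mem_biUnion.mpr ⟨mF q, hmIcc, hme⟩, Finset.mem_univ _⟩
  -- injectivity on S
  have hinj : Set.InjOn Φ S := by
    intro q hq q' hq' heq
    have hmm : mF q = mF q' := congrArg (fun x => x.1.1) heq
    have hee : eF q = eF q' := congrArg (fun x => x.1.2) heq
    have hb1 : decide (0 ≤ wF q) = decide (0 ≤ wF q') := congrArg (fun x => x.2.1) heq
    have hb2 : decide (q.1 ≤ q.2) = decide (q'.1 ≤ q'.2) := congrArg (fun x => x.2.2) heq
    -- X equal
    have hX : (wF q) ^ 2 + 3 * n₁ ^ 2 - 2 * eF q = (wF q') ^ 2 + 3 * n₁ ^ 2 - 2 * eF q' := by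
      have h : eF q * (wF q ^ 2 + 3 * n₁ ^ 2 - 2 * eF q)
          = eF q * (wF q' ^ 2 + 3 * n₁ ^ 2 - 2 * eF q') := by
        conv_rhs => rw [hee]
        exact hmm
      exact mul_left_cancel₀ (he_ne q hq) h
    have hw2 : (wF q) ^ 2 = (wF q') ^ 2 := by
      rw [hee] at hX; linarith
    have hw : wF q = wF q' := by
      have hb1' : (0 ≤ wF q) ↔ (0 ≤ wF q') := by
        constructor <;> intro h <;> [exact of_decide_eq_true (hb1 ▸ decide_eq_true h);
          exact of_decide_eq_true (hb1.symm ▸ decide_eq_true h)]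
      rcases le_or_gt 0 (wF q) with h0 | h0
      · have h0' : 0 ≤ wF q' := by rw [← hb1']; exact h0
        nlinarith
      · have h0' : wF q' < 0 := by
          by_contra hcon
          push_neg at hcon
          have := hb1'.mpr hcon
          omega
        exact le_antisymm (by nlinarith) (by nlinarith)
    -- c + d and c*d equal
    have hs_eq : (q.1 - n₁) + (q.2 - n₁) = (q'.1 - n₁) + (q'.2 - n₁) := by
      rw [hwF] at hw; simp only at hw; omega
    have hp_eq : (q.1 - n₁) * (q.2 - n₁) = (q'.1 - n₁) * (q'.2 - n₁) := by
      rw [heF] at hee; exact hee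
    have hb2' : (q.1 ≤ q.2) ↔ (q'.1 ≤ q'.2) := by
      constructor <;> intro h <;> [exact of_decide_eq_true (hb2 ▸ decide_eq_true h);
        exact of_decide_eq_true (hb2.symm ▸ decide_eq_true h)]
    have hdiff2 : (q.2 - q.1) ^ 2 = (q'.2 - q'.1) ^ 2 := by
      linear_combination ((q.1 - n₁) + (q.2 - n₁) + (q'.1 - n₁) + (q'.2 - n₁)) * hs_eq - 4 * hp_eq
    have hdiff : q.2 - q.1 = q'.2 - q'.1 := by
      rcases le_or_gt q.1 q.2 with hle | hlt
      · have hle' : q'.1 ≤ q'.2 := hb2'.mp hle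
        exact le_antisymm (by nlinarith) (by nlinarith)
      · have hlt' : q'.2 < q'.1 := by
          by_contra hcon
          push_neg at hcon
          have := hb2'.mpr hcon
          omega
        exact le_antisymm (by nlinarith) (by nlinarith)
    have : q.1 = q'.1 ∧ q.2 = q'.2 := by constructor <;> omega
    exact Prod.ext this.1 this.2
  -- cardinality chain
  have hcard1 : S.ncard ≤ T.card := by
    have := Set.ncard_le_ncard_of_injOn Φ hmaps hinj T.finite_toSet
    simpa using this
  have hcard2 : (T.card : ℝ) ≤ 3464 * Cd * (|(A:ℝ)| + 216) ^ ε := by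
    have hX0 : (0:ℝ) ≤ (|(A:ℝ)| + 216) ^ ε := by positivity
    have hDcard : ∀ m ∈ Finset.Icc (A - 216) (A + 216),
        ((D m).card : ℝ) ≤ 2 * (Cd * (|(A:ℝ)| + 216) ^ ε) := by
      intro m hm
      have hle : (D m).card ≤ 2 * m.natAbs.divisors.card := by
        calc (D m).card ≤ ((m.natAbs.divisors).image fun k : ℕ => (m, (k:ℤ))).card
              + ((m.natAbs.divisors).image fun k : ℕ => (m, -(k:ℤ))).card :=
              Finset.card_union_le _ _
        _ ≤ m.natAbs.divisors.card + m.natAbs.divisors.card :=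
              Nat.add_le_add (Finset.card_image_le) (Finset.card_image_le)
        _ = 2 * m.natAbs.divisors.card := by ring
      by_cases hm0 : m = 0
      · subst hm0
        simp only [hD, Int.natAbs_zero, Nat.divisors_zero, Finset.image_empty,
          Finset.empty_union, Finset.card_empty, Nat.cast_zero]
        positivity
      · have h1 : m.natAbs ≠ 0 := Int.natAbs_ne_zero.mpr hm0
        have h2 := hdiv m.natAbs h1
        have h3 : ((m.natAbs : ℕ) : ℝ) ≤ |(A:ℝ)| + 216 := by
          rw [Finset.mem_Icc] at hm
          have : m.natAbs ≤ A.natAbs + 216 := by omega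
          calc ((m.natAbs : ℕ) : ℝ) ≤ ((A.natAbs + 216 : ℕ) : ℝ) := by exact_mod_cast this
          _ = |(A:ℝ)| + 216 := by
                push_cast [Nat.cast_natAbs, Int.cast_abs]
                ring
        calc ((D m).card : ℝ) ≤ 2 * (m.natAbs.divisors.card : ℝ) := by exact_mod_cast hle
        _ ≤ 2 * (Cd * ((m.natAbs : ℕ) : ℝ) ^ ε) := by linarith
        _ ≤ 2 * (Cd * (|(A:ℝ)| + 216) ^ ε) := by
              have := Real.rpow_le_rpow (by positivity) h3 hε
              have hCd0 : (0:ℝ) ≤ Cd := by linarith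
              nlinarith
    have hbi : (((Finset.Icc (A - 216) (A + 216)).biUnion D).card : ℝ)
        ≤ 433 * (2 * (Cd * (|(A:ℝ)| + 216) ^ ε)) := by
      have h1 : ((Finset.Icc (A - 216) (A + 216)).biUnion D).card
          ≤ ∑ m ∈ Finset.Icc (A - 216) (A + 216), (D m).card :=
        Finset.card_biUnion_le
      have h2 : ((∑ m ∈ Finset.Icc (A - 216) (A + 216), (D m).card : ℕ) : ℝ)
          ≤ ∑ m ∈ Finset.Icc (A - 216) (A + 216), (2 * (Cd * (|(A:ℝ)| + 216) ^ ε)) := by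
        push_cast
        exact Finset.sum_le_sum hDcard
      have h3 : (Finset.Icc (A - 216) (A + 216)).card = 433 := by
        rw [Int.card_Icc]
        omega
      calc (((Finset.Icc (A - 216) (A + 216)).biUnion D).card : ℝ)
          ≤ ((∑ m ∈ Finset.Icc (A - 216) (A + 216), (D m).card : ℕ) : ℝ) := by
            exact_mod_cast h1
      _ ≤ ∑ m ∈ Finset.Icc (A - 216) (A + 216), (2 * (Cd * (|(A:ℝ)| + 216) ^ ε)) := h2
      _ = 433 * (2 * (Cd * (|(A:ℝ)| + 216) ^ ε)) := by
            rw [Finset.sum_const, h3]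
            simp [nsmul_eq_mul]
    have hTcard : T.card = ((Finset.Icc (A - 216) (A + 216)).biUnion D).card * 4 := by
      rw [hT, Finset.card_product]
      norm_num [Finset.card_univ]
    rw [hTcard]
    push_cast
    nlinarith [hX0, hbi]
  calc (S.ncard : ℝ) ≤ (T.card : ℝ) := by exact_mod_cast hcard1
  _ ≤ _ := hcard2

set_option maxHeartbeats 1000000 in
/-- First-generation nearly-resonant sum bound: for `0 < s < 1` there is `C > 0` such
that for every `n : ℤ`, the sum over pairs `(n₁, n₃)` with `n₁ ≠ n`, `n₃ ≠ n` of
`⟨n⟩^{4s}/φ₁²` multiplied by the number of second-generation pairs `(m₁, m₃)` with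
`m₁ ≠ n₁`, `m₃ ≠ n₁` and `|φ₁ + φ₂| ≤ 216` is at most `C`. -/
theorem nearly_resonant_sum_bound (s : ℝ) (hs₀ : 0 < s) (hs₁ : s < 1) :
    ∃ C : ℝ, 0 < C ∧ ∀ n : ℤ,
      (∑' p : ℤ × ℤ,
        if p.1 ≠ n ∧ p.2 ≠ n then
          (1 + (n : ℝ) ^ 2) ^ (2 * s) /
            (((p.1 ^ 4 - (p.1 + p.2 - n) ^ 4 + p.2 ^ 4 - n ^ 4 : ℤ) : ℝ)) ^ 2 *
          (Set.ncard {q : ℤ × ℤ | q.1 ≠ p.1 ∧ q.2 ≠ p.1 ∧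
            |(p.1 ^ 4 - (p.1 + p.2 - n) ^ 4 + p.2 ^ 4 - n ^ 4) +
              (q.1 ^ 4 - (q.1 + q.2 - p.1) ^ 4 + q.2 ^ 4 - p.1 ^ 4)| ≤ 216} : ℝ)
        else 0) ≤ C := by
  classical
  set ε : ℝ := 1 - s with hεdef
  have hε0 : 0 < ε := by simp only [hεdef]; linarith
  obtain ⟨Cd, hCd1, hdiv⟩ := divisor_count_rpow_bound ε hε0
  set C₃ : ℝ := 4 * (3464 * Cd * 109) with hC₃
  have hC₃0 : 0 < C₃ := by
    have : (0:ℝ) < Cd := by linarith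
    positivity
  set F : ℤ → ℝ := fun a => |(a:ℝ)| ^ (-(1+s)) with hF
  have hFnonneg : ∀ a, 0 ≤ F a := fun a => Real.rpow_nonneg (abs_nonneg _) _
  have hFsum : Summable F := Real.summable_abs_int_rpow (by linarith)
  have hH₀sum : Summable (fun p : ℤ × ℤ => F p.1 * F p.2) :=
    hFsum.mul_of_nonneg hFsum hFnonneg hFnonneg
  set tH : ℝ := ∑' p : ℤ × ℤ, F p.1 * F p.2 with htH
  have htH0 : 0 ≤ tH := tsum_nonneg (fun p => mul_nonneg (hFnonneg _) (hFnonneg _))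
  refine ⟨C₃ * tH + 1, by positivity, fun n => ?_⟩
  -- the comparison function
  set g : ℤ × ℤ → ℝ := fun p => C₃ * (F (p.1 - n) * F (p.2 - n)) with hg
  have hgnonneg : ∀ p, 0 ≤ g p := fun p => by
    have := hFnonneg (p.1 - n); have := hFnonneg (p.2 - n); positivity
  have hgsum : Summable g := by
    have h1 : Summable (fun p : ℤ × ℤ => F (p.1 - n) * F (p.2 - n)) :=
      (hH₀sum.comp_injective
        (Equiv.prodCongr (Equiv.subRight n) (Equiv.subRight n)).injective).congr (fun p => rfl)
    exact h1.mul_left C₃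
  have hgtsum : ∑' p, g p = C₃ * tH := by
    rw [hg, tsum_mul_left]
    congr 1
    exact (Equiv.prodCongr (Equiv.subRight n) (Equiv.subRight n)).tsum_eq
      (fun p : ℤ × ℤ => F p.1 * F p.2)
  -- pointwise bound
  have hpt : ∀ p : ℤ × ℤ,
      (if p.1 ≠ n ∧ p.2 ≠ n then
          (1 + (n : ℝ) ^ 2) ^ (2 * s) /
            (((p.1 ^ 4 - (p.1 + p.2 - n) ^ 4 + p.2 ^ 4 - n ^ 4 : ℤ) : ℝ)) ^ 2 *
          (Set.ncard {q : ℤ × ℤ | q.1 ≠ p.1 ∧ q.2 ≠ p.1 ∧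
            |(p.1 ^ 4 - (p.1 + p.2 - n) ^ 4 + p.2 ^ 4 - n ^ 4) +
              (q.1 ^ 4 - (q.1 + q.2 - p.1) ^ 4 + q.2 ^ 4 - p.1 ^ 4)| ≤ 216} : ℝ)
        else 0) ≤ g p := by
    intro p
    by_cases hp : p.1 ≠ n ∧ p.2 ≠ n
    · rw [if_pos hp]
      obtain ⟨h1, h2⟩ := hp
      set a : ℤ := p.1 - n with hadef
      set b : ℤ := p.2 - n with hbdef
      have ha : a ≠ 0 := sub_ne_zero.mpr h1
      have hb : b ≠ 0 := sub_ne_zero.mpr h2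
      set Q : ℤ := 3 * (2*n + a + b)^2 + a^2 + b^2 with hQdef
      set A : ℤ := p.1 ^ 4 - (p.1 + p.2 - n) ^ 4 + p.2 ^ 4 - n ^ 4 with hAdef
      have hphi : A = -(a * b * Q) := by
        simp only [hAdef, hQdef, hadef, hbdef]; ring
      have ha2 : (1:ℤ) ≤ a^2 := by
        rcases lt_or_gt_of_ne ha with h | h <;> nlinarith
      have hb2 : (1:ℤ) ≤ b^2 := by
        rcases lt_or_gt_of_ne hb with h | h <;> nlinarith
      have hQ2 : (2:ℤ) ≤ Q := by
        have := sq_nonneg (2*n + a + b); simp only [hQdef]; nlinarith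
      have hn2 : 1 + n^2 ≤ 2 * Q := by
        have h1' := sq_nonneg (2*n + a + b + a)
        have h2' := sq_nonneg (2*n + a + b + b)
        have h3' := sq_nonneg (a - b)
        simp only [hQdef]
        nlinarith
      -- real versions
      set ar : ℝ := |(a:ℝ)| with har
      set br : ℝ := |(b:ℝ)| with hbr
      set Qr : ℝ := (Q:ℝ) with hQr
      have har1 : 1 ≤ ar := by
        rw [har, ← Int.cast_abs]; exact_mod_cast Int.one_le_abs ha
      have hbr1 : 1 ≤ br := by
        rw [hbr, ← Int.cast_abs]; exact_mod_cast Int.one_le_abs hb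
      have hQr2 : (2:ℝ) ≤ Qr := by rw [hQr]; exact_mod_cast hQ2
      have har0 : 0 < ar := by linarith
      have hbr0 : 0 < br := by linarith
      have hQr0 : 0 < Qr := by linarith
      have hAabs : |((A:ℤ):ℝ)| = ar * br * Qr := by
        rw [hphi]
        push_cast
        rw [abs_neg, abs_mul, abs_mul, abs_of_pos hQr0]
      -- cardinality bound
      have hcard := inner_card_le Cd ε hCd1 hε0.le hdiv p.1 A
      have hab1 : 1 ≤ ar * br := by nlinarith
      have habQ : 2 ≤ ar * br * Qr := by
        have := mul_le_mul_of_nonneg_right hab1 hQr0.le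
        rw [one_mul] at this
        linarith
      have hwin : |((A:ℤ):ℝ)| + 216 ≤ 109 * (ar * br * Qr) := by
        rw [hAabs]
        linarith
      have hcard2 : (Set.ncard {q : ℤ × ℤ | q.1 ≠ p.1 ∧ q.2 ≠ p.1 ∧
            |A + (q.1 ^ 4 - (q.1 + q.2 - p.1) ^ 4 + q.2 ^ 4 - p.1 ^ 4)| ≤ 216} : ℝ)
          ≤ 3464 * Cd * 109 * (ar^ε * br^ε * Qr^ε) := by
        refine le_trans hcard ?_
        have hmono : (|((A:ℤ):ℝ)| + 216) ^ ε ≤ (109 * (ar * br * Qr)) ^ ε :=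
          Real.rpow_le_rpow (by positivity) hwin hε0.le
        have hsplit : (109 * (ar * br * Qr)) ^ ε ≤ 109 * (ar^ε * br^ε * Qr^ε) := by
          rw [Real.mul_rpow (by norm_num) (by positivity),
            Real.mul_rpow (by positivity) (by positivity),
            Real.mul_rpow (by positivity) (by positivity)]
          have h109 : (109:ℝ)^ε ≤ 109 := by
            calc (109:ℝ)^ε ≤ (109:ℝ)^(1:ℝ) :=
                  Real.rpow_le_rpow_of_exponent_le (by norm_num) (by simp only [hεdef]; linarith)
            _ = 109 := Real.rpow_one _
          have hrest : (0:ℝ) ≤ ar^ε * br^ε * Qr^ε :=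
            mul_nonneg (mul_nonneg (Real.rpow_nonneg har0.le ε)
              (Real.rpow_nonneg hbr0.le ε)) (Real.rpow_nonneg hQr0.le ε)
          calc (109:ℝ)^ε * (ar^ε * br^ε * Qr^ε) ≤ 109 * (ar^ε * br^ε * Qr^ε) :=
                mul_le_mul_of_nonneg_right h109 hrest
          _ = 109 * (ar^ε * br^ε * Qr^ε) := rfl
        have hCd0 : (0:ℝ) < Cd := by linarith
        calc (3464:ℝ) * Cd * (|((A:ℤ):ℝ)| + 216) ^ ε
            ≤ 3464 * Cd * (109 * (ar^ε * br^ε * Qr^ε)) :=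
              mul_le_mul_of_nonneg_left (le_trans hmono hsplit)
                (by positivity)
        _ = 3464 * Cd * 109 * (ar^ε * br^ε * Qr^ε) := by ring
      -- numerator bound
      have hnum : (1 + (n:ℝ)^2) ^ (2*s) ≤ 4 * Qr ^ (2*s) := by
        have hb1 : (1 + (n:ℝ)^2) ≤ 2 * Qr := by
          rw [hQr]
          exact_mod_cast hn2
        calc (1 + (n:ℝ)^2) ^ (2*s) ≤ (2*Qr) ^ (2*s) :=
              Real.rpow_le_rpow (by positivity) hb1 (by linarith)
        _ = 2^(2*s) * Qr^(2*s) := Real.mul_rpow (by norm_num) hQr0.le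
        _ ≤ 4 * Qr^(2*s) := by
              have h4 : (2:ℝ)^(2*s) ≤ 2^(2:ℝ) :=
                Real.rpow_le_rpow_of_exponent_le (by norm_num) (by linarith)
              have h4' : (2:ℝ)^(2:ℝ) = 4 := by
                rw [show (2:ℝ) = ((2:ℕ):ℝ) by norm_num, Real.rpow_natCast]; norm_num
              have := Real.rpow_nonneg hQr0.le (2*s)
              nlinarith
      -- denominator identity
      have hden : (((A:ℤ):ℝ))^2 = ar^2 * br^2 * Qr^2 := by
        rw [← sq_abs, hAabs]; ring
      -- putting it together
      have hcardnn : (0:ℝ) ≤ (Set.ncard {q : ℤ × ℤ | q.1 ≠ p.1 ∧ q.2 ≠ p.1 ∧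
            |A + (q.1 ^ 4 - (q.1 + q.2 - p.1) ^ 4 + q.2 ^ 4 - p.1 ^ 4)| ≤ 216} : ℝ) :=
        Nat.cast_nonneg _
      have step : (1 + (n:ℝ)^2) ^ (2*s) / (((A:ℤ):ℝ))^2 *
          (Set.ncard {q : ℤ × ℤ | q.1 ≠ p.1 ∧ q.2 ≠ p.1 ∧
            |A + (q.1 ^ 4 - (q.1 + q.2 - p.1) ^ 4 + q.2 ^ 4 - p.1 ^ 4)| ≤ 216} : ℝ)
          ≤ (4 * Qr^(2*s)) / (ar^2 * br^2 * Qr^2) * (3464 * Cd * 109 * (ar^ε * br^ε * Qr^ε)) := by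
        rw [hden]
        have hd1 : (1 + (n:ℝ)^2) ^ (2*s) / (ar^2 * br^2 * Qr^2)
            ≤ (4 * Qr^(2*s)) / (ar^2 * br^2 * Qr^2) := by
          gcongr
        exact mul_le_mul hd1 hcard2 hcardnn (by positivity)
      -- rpow algebra
      have hgp : g p = C₃ * (F a * F b) := rfl
      have har2 : ar^2 = ar^(2:ℝ) := by
        rw [← Real.rpow_natCast ar 2]; norm_num
      have hbr2 : br^2 = br^(2:ℝ) := by
        rw [← Real.rpow_natCast br 2]; norm_num
      have hQrsq : Qr^2 = Qr^(2:ℝ) := by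
        rw [← Real.rpow_natCast Qr 2]; norm_num
      have hFa : ar^ε / ar^2 = F a := by
        rw [hF, har2, ← Real.rpow_sub har0]
        simp only [har]
        congr 1
        rw [hεdef]; ring
      have hFb : br^ε / br^2 = F b := by
        rw [hF, hbr2, ← Real.rpow_sub hbr0]
        simp only [hbr]
        congr 1
        rw [hεdef]; ring
      have hQfac : Qr^(2*s) * Qr^ε / Qr^2 ≤ 1 := by
        rw [← Real.rpow_add hQr0, hQrsq, ← Real.rpow_sub hQr0]
        apply Real.rpow_le_one_of_one_le_of_nonpos (by linarith)
        rw [hεdef]; linarith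
      have key : (4 * Qr^(2*s)) / (ar^2 * br^2 * Qr^2) * (3464 * Cd * 109 * (ar^ε * br^ε * Qr^ε))
          = C₃ * ((ar^ε / ar^2) * (br^ε / br^2) * (Qr^(2*s) * Qr^ε / Qr^2)) := by
        rw [hC₃]; ring
      calc (1 + (n:ℝ)^2) ^ (2*s) / (((A:ℤ):ℝ))^2 *
          (Set.ncard {q : ℤ × ℤ | q.1 ≠ p.1 ∧ q.2 ≠ p.1 ∧
            |A + (q.1 ^ 4 - (q.1 + q.2 - p.1) ^ 4 + q.2 ^ 4 - p.1 ^ 4)| ≤ 216} : ℝ)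
          ≤ (4 * Qr^(2*s)) / (ar^2 * br^2 * Qr^2) * (3464 * Cd * 109 * (ar^ε * br^ε * Qr^ε)) := step
      _ = C₃ * ((ar^ε / ar^2) * (br^ε / br^2) * (Qr^(2*s) * Qr^ε / Qr^2)) := key
      _ = C₃ * (F a * F b * (Qr^(2*s) * Qr^ε / Qr^2)) := by rw [hFa, hFb]
      _ ≤ C₃ * (F a * F b * 1) := by
          apply mul_le_mul_of_nonneg_left _ hC₃0.le
          exact mul_le_mul_of_nonneg_left hQfac (mul_nonneg (hFnonneg a) (hFnonneg b))
      _ = g p := by rw [mul_one, hgp]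
    · rw [if_neg hp]; exact hgnonneg p
  have hnonneg : ∀ p : ℤ × ℤ, (0:ℝ) ≤
      (if p.1 ≠ n ∧ p.2 ≠ n then
          (1 + (n : ℝ) ^ 2) ^ (2 * s) /
            (((p.1 ^ 4 - (p.1 + p.2 - n) ^ 4 + p.2 ^ 4 - n ^ 4 : ℤ) : ℝ)) ^ 2 *
          (Set.ncard {q : ℤ × ℤ | q.1 ≠ p.1 ∧ q.2 ≠ p.1 ∧
            |(p.1 ^ 4 - (p.1 + p.2 - n) ^ 4 + p.2 ^ 4 - n ^ 4) +
              (q.1 ^ 4 - (q.1 + q.2 - p.1) ^ 4 + q.2 ^ 4 - p.1 ^ 4)| ≤ 216} : ℝ)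
        else 0) := by
    intro p
    by_cases hp : p.1 ≠ n ∧ p.2 ≠ n
    · rw [if_pos hp]; positivity
    · rw [if_neg hp]
  have hmain := Summable.tsum_le_tsum hpt (Summable.of_nonneg_of_le hnonneg hpt hgsum) hgsum
  rw [hgtsum] at hmain
  linarith
end

section
/- There exist constants c₁, c₂ > 0 and x₀ ∈ (0,1) such that for all real x with 0 < x < x₀: c₁·x²·log(1/x) ≤ Σ_{n∈ℤ} |1 − e^{inx}|² / (1 + n²)^{3/2} ≤ c₂·x²·log(1/x). -/
open Real

lemma abs_sq_eq (θ : ℝ) :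
    ‖1 - Complex.exp ((θ : ℂ) * Complex.I)‖ ^ 2 = 2 - 2 * Real.cos θ := by
  rw [Complex.exp_mul_I, Complex.sq_norm, Complex.normSq_apply]
  simp only [Complex.sub_re, Complex.sub_im, Complex.add_re, Complex.add_im, Complex.one_re,
    Complex.one_im, Complex.mul_re, Complex.mul_im, Complex.I_re, Complex.I_im,
    Complex.cos_ofReal_re, Complex.cos_ofReal_im, Complex.sin_ofReal_re, Complex.sin_ofReal_im]
  nlinarith [Real.sin_sq_add_cos_sq θ]

-- rpow facts
lemma den_le (k : ℝ) (hk : 1 ≤ k) : (1 + k ^ 2) ^ ((3:ℝ)/2) ≤ 3 * k ^ 3 := by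
  have h1 : (1 + k ^ 2) ^ ((3:ℝ)/2) ≤ (2 * k ^ 2) ^ ((3:ℝ)/2) := by
    apply Real.rpow_le_rpow (by positivity) (by nlinarith) (by norm_num)
  have h2 : (2 * k ^ 2) ^ ((3:ℝ)/2) = (2:ℝ) ^ ((3:ℝ)/2) * k ^ 3 := by
    rw [Real.mul_rpow (by norm_num) (by positivity)]
    congr 1
    rw [← Real.rpow_natCast k 2, ← Real.rpow_mul (by positivity)]
    norm_num
  have h3 : (2:ℝ) ^ ((3:ℝ)/2) ≤ 3 := by
    have : (2:ℝ) ^ ((3:ℝ)/2) = 2 * Real.sqrt 2 := by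
      rw [show (3:ℝ)/2 = 1 + 1/2 by norm_num, Real.rpow_add (by norm_num), Real.rpow_one,
        Real.sqrt_eq_rpow]
    nlinarith [Real.sq_sqrt (show (0:ℝ) ≤ 2 by norm_num), Real.sqrt_nonneg 2]
  nlinarith [pow_pos (lt_of_lt_of_le one_pos hk) 3]

lemma den_ge_cube (k : ℝ) (hk : 0 ≤ k) : k ^ 3 ≤ (1 + k ^ 2) ^ ((3:ℝ)/2) := by
  have h1 : (k ^ 2) ^ ((3:ℝ)/2) ≤ (1 + k ^ 2) ^ ((3:ℝ)/2) := by
    apply Real.rpow_le_rpow (by positivity) (by nlinarith) (by norm_num)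
  calc k ^ 3 = (k ^ 2) ^ ((3:ℝ)/2) := by
        rw [← Real.rpow_natCast k 2, ← Real.rpow_mul hk]
        norm_num
    _ ≤ _ := h1

lemma den_ge_sq (k : ℝ) : 1 + k ^ 2 ≤ (1 + k ^ 2) ^ ((3:ℝ)/2) := by
  calc 1 + k ^ 2 = (1 + k ^ 2) ^ (1:ℝ) := by rw [Real.rpow_one]
    _ ≤ _ := Real.rpow_le_rpow_of_exponent_le (by nlinarith [sq_nonneg k]) (by norm_num)

open Filter in

lemma telescope_hasSum (N : ℕ) (hN : 0 < N) :
    HasSum (fun n : ℕ => 1 / (((n:ℝ) + N) * ((n:ℝ) + N + 1))) (1 / N) := by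
  have hNpos : (0:ℝ) < N := by exact_mod_cast hN
  have key : ∀ n : ℕ, 1 / (((n:ℝ) + N) * ((n:ℝ) + N + 1))
      = 1 / ((n:ℝ) + N) - 1 / (((n+1:ℕ):ℝ) + N) := by
    intro n
    have h1 : ((n:ℝ) + N) ≠ 0 := by positivity
    have h2 : ((n:ℝ) + N + 1) ≠ 0 := by positivity
    push_cast
    rw [eq_sub_iff_add_eq, div_add_div _ _ (by positivity) (by positivity),
      div_eq_div_iff (by positivity) (by positivity)]
    ring
  have hnn : ∀ n : ℕ, 0 ≤ 1 / (((n:ℝ) + N) * ((n:ℝ) + N + 1)) := fun n => by positivity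
  rw [hasSum_iff_tendsto_nat_of_nonneg hnn]
  have hps : ∀ k : ℕ, ∑ i ∈ Finset.range k, 1 / (((i:ℝ) + N) * ((i:ℝ) + N + 1))
      = 1 / ((0:ℝ) + N) - 1 / ((k:ℝ) + N) := by
    intro k
    rw [Finset.sum_congr rfl (fun i _ => key i)]
    rw [Finset.sum_range_sub' (fun i : ℕ => 1 / ((i:ℝ) + N))]
    norm_num
  simp only [hps]
  have h0 : Tendsto (fun k : ℕ => 1 / ((k:ℝ) + N)) atTop (nhds 0) := by
    simp only [one_div]
    exact Tendsto.comp tendsto_inv_atTop_zero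
      (tendsto_atTop_add_const_right _ _ tendsto_natCast_atTop_atTop)
  have := (tendsto_const_nhds (x := 1 / ((0:ℝ) + N)) (f := atTop (α := ℕ))).sub h0
  simpa using this


noncomputable def fc (x : ℝ) (n : ℤ) : ℝ :=
  (2 - 2 * Real.cos ((n : ℝ) * x)) / (1 + (n : ℝ) ^ 2) ^ ((3:ℝ)/2)

lemma fc_nonneg (x : ℝ) (n : ℤ) : 0 ≤ fc x n := by
  apply div_nonneg _ (Real.rpow_nonneg (by positivity) _)
  nlinarith [Real.cos_le_one ((n:ℝ) * x)]

lemma fc_neg (x : ℝ) (n : ℤ) : fc x (-n) = fc x n := by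
  unfold fc
  push_cast
  rw [neg_mul, Real.cos_neg, neg_pow, even_two.neg_pow]
  ring_nf

lemma fc_zero (x : ℝ) : fc x 0 = 0 := by simp [fc]

lemma fc_le (x : ℝ) (n : ℤ) : fc x n ≤ 8 / (|n| + 1 : ℝ) ^ 2 := by
  have hd : ((|n| + 1 : ℝ)) ^ 2 / 2 ≤ (1 + (n:ℝ) ^ 2) ^ ((3:ℝ)/2) := by
    have h1 : (1 + (n:ℝ) ^ 2) ^ (1:ℝ) ≤ (1 + (n:ℝ) ^ 2) ^ ((3:ℝ)/2) :=
      Real.rpow_le_rpow_of_exponent_le (by nlinarith [sq_nonneg ((n:ℝ))]) (by norm_num)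
    rw [Real.rpow_one] at h1
    have h2 : ((|n| + 1 : ℝ)) ^ 2 / 2 ≤ 1 + (n:ℝ) ^ 2 := by
      have : |(n:ℝ)| = ((|n| : ℤ) : ℝ) := by simp [Int.cast_abs]
      nlinarith [sq_abs ((n:ℝ)), abs_nonneg ((n:ℝ)), sq_nonneg (|(n:ℝ)| - 1)]
    linarith
  have hnum : 2 - 2 * Real.cos ((n:ℝ) * x) ≤ 4 := by
    nlinarith [Real.neg_one_le_cos ((n:ℝ) * x)]
  have hdpos : (0:ℝ) < (1 + (n:ℝ) ^ 2) ^ ((3:ℝ)/2) := Real.rpow_pos_of_pos (by positivity) _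
  have habs : (0:ℝ) < (|n| + 1 : ℝ) := by positivity
  calc fc x n ≤ 4 / (1 + (n:ℝ) ^ 2) ^ ((3:ℝ)/2) := by
        unfold fc; gcongr
    _ ≤ 4 / (((|n| + 1 : ℝ)) ^ 2 / 2) := by
        exact div_le_div_of_nonneg_left (by norm_num) (by positivity) hd
    _ = 8 / (|n| + 1 : ℝ) ^ 2 := by
        rw [div_div_eq_mul_div]; norm_num

lemma summable_aux : Summable (fun n : ℕ => 8 / ((n : ℝ) + 1) ^ 2) := by
  have h : Summable (fun n : ℕ => 1 / ((n : ℝ)) ^ 2) := summable_one_div_nat_pow.mpr one_lt_two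
  have h1 : Summable (fun n : ℕ => 1 / (((n + 1 : ℕ)) : ℝ) ^ 2) := (summable_nat_add_iff (f := fun n : ℕ => 1 / ((n : ℝ)) ^ 2) 1).mpr h
  have := h1.mul_left 8
  refine this.congr fun n => ?_
  push_cast
  ring

lemma fc_summable_nat (x : ℝ) : Summable (fun n : ℕ => fc x n) := by
  refine Summable.of_nonneg_of_le (fun n : ℕ => fc_nonneg x (n:ℤ)) (fun n : ℕ => ?_) summable_aux
  have := fc_le x n
  simpa using this

lemma fc_summable_shift (x : ℝ) (k : ℕ) : Summable (fun n : ℕ => fc x (n + k)) := by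
  have := (summable_nat_add_iff (f := fun n : ℕ => fc x n) k).mpr (fc_summable_nat x)
  refine this.congr fun n => ?_
  push_cast
  ring_nf

lemma fc_summable (x : ℝ) : Summable (fc x) := by
  apply Summable.of_nat_of_neg_add_one (fc_summable_nat x)
  refine ((fc_summable_shift x 1).congr fun n => ?_)
  rw [← fc_neg]
  push_cast
  ring_nf

lemma fc_tsum_eq (x : ℝ) : ∑' n : ℤ, fc x n = 2 * ∑' n : ℕ, fc x (n + 1) := by
  rw [tsum_of_nat_of_neg_add_one (fc_summable_nat x)
    (((fc_summable_shift x 1).congr fun n => by rw [← fc_neg]; push_cast; ring_nf))]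
  have h1 : ∑' n : ℕ, fc x (-((n:ℤ) + 1)) = ∑' n : ℕ, fc x (n + 1) := by
    refine tsum_congr fun n => ?_
    rw [← fc_neg]
    push_cast
    ring_nf
  have h2 : ∑' n : ℕ, fc x (n : ℤ) = ∑' n : ℕ, fc x ((n:ℤ) + 1) := by
    rw [Summable.tsum_eq_zero_add (fc_summable_nat x)]
    simp only [Nat.cast_zero, fc_zero, zero_add]
    refine tsum_congr fun n => ?_
    push_cast
    ring_nf
  rw [h1, h2]
  push_cast
  ring

set_option maxHeartbeats 1000000 in
/-- Critical case asymptotics: there are constants `c₁, c₂ > 0` and `x₀ ∈ (0,1)` such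
that for `0 < x < x₀`,
`c₁ x² log(1/x) ≤ Σ_{n ∈ ℤ} |1 - e^{inx}|²/(1+n²)^{3/2} ≤ c₂ x² log(1/x)`. -/
theorem critical_increment_asympt :
    ∃ c₁ c₂ x₀ : ℝ, 0 < c₁ ∧ 0 < c₂ ∧ 0 < x₀ ∧ x₀ < 1 ∧
      ∀ x : ℝ, 0 < x → x < x₀ →
        c₁ * x ^ 2 * Real.log (1 / x) ≤
          (∑' n : ℤ, ‖1 - Complex.exp (Complex.I * (n : ℂ) * (x : ℂ))‖ ^ 2 /
            (1 + (n : ℝ) ^ 2) ^ ((3 : ℝ) / 2)) ∧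
        (∑' n : ℤ, ‖1 - Complex.exp (Complex.I * (n : ℂ) * (x : ℂ))‖ ^ 2 /
            (1 + (n : ℝ) ^ 2) ^ ((3 : ℝ) / 2)) ≤
          c₂ * x ^ 2 * Real.log (1 / x) := by
  refine ⟨2/15, 36, 1/100, by norm_num, by norm_num, by norm_num, by norm_num, ?_⟩
  intro x hx hx'
  have hxinv : (100:ℝ) < 1/x := by
    rw [lt_div_iff₀ hx]
    nlinarith
  obtain ⟨N, hNdef⟩ : ∃ n : ℕ, n = ⌊1/x⌋₊ := ⟨_, rfl⟩
  have hN100 : 100 ≤ N := by rw [hNdef]; exact Nat.le_floor (by linarith)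
  have hNpos : 0 < N := lt_of_lt_of_le (by norm_num) hN100
  have hNR : (0:ℝ) < N := by exact_mod_cast hNpos
  have hNle : (N:ℝ) ≤ 1/x := by rw [hNdef]; exact Nat.floor_le (by positivity)
  have hNgt : 1/x < (N:ℝ) + 1 := by rw [hNdef]; exact Nat.lt_floor_add_one _
  have hNhalf : 1/(2*x) ≤ (N:ℝ) := by
    rw [div_le_iff₀ (by positivity)]
    have h1 : 1 < ((N:ℝ) + 1) * x := (div_lt_iff₀ hx).mp hNgt
    nlinarith
  have hlog : 1 ≤ Real.log (1/x) := by
    rw [Real.le_log_iff_exp_le (by positivity)]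
    have := Real.exp_one_lt_d9
    nlinarith
  have hlogpos : 0 < Real.log (1/x) := lt_of_lt_of_le one_pos hlog
  -- identify the statement's sum with `fc`
  have hstmt : (∑' n : ℤ, ‖1 - Complex.exp (Complex.I * (n : ℂ) * (x : ℂ))‖ ^ 2 /
      (1 + (n : ℝ) ^ 2) ^ ((3 : ℝ) / 2)) = ∑' n : ℤ, fc x n := by
    refine tsum_congr fun n => ?_
    have hc : Complex.I * (n : ℂ) * (x : ℂ) = (((n:ℝ) * x : ℝ) : ℂ) * Complex.I := by
      push_cast; ring
    rw [hc, abs_sq_eq]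
    rfl
  rw [hstmt, fc_tsum_eq]
  -- harmonic sum identity
  have hharm_eq : ((harmonic N : ℚ) : ℝ) = ∑ i ∈ Finset.range N, (1/((i:ℝ)+1)) := by
    rw [harmonic]
    push_cast
    simp [one_div]
  constructor
  · -- lower bound
    have hsum_ge : ∑ i ∈ Finset.range N, fc x ((i:ℤ)+1) ≤ ∑' n : ℕ, fc x ((n:ℤ)+1) :=
      Summable.sum_le_tsum _ (fun i _ => fc_nonneg _ _) (fc_summable_shift x 1)
    have hterm : ∀ i ∈ Finset.range N, (2/15) * x^2 * (1/((i:ℝ)+1)) ≤ fc x ((i:ℤ)+1) := by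
      intro i hi
      have hiN : i + 1 ≤ N := Finset.mem_range.mp hi
      obtain ⟨k, hk⟩ : ∃ k : ℝ, k = (i:ℝ) + 1 := ⟨_, rfl⟩
      rw [← hk]
      have hk1 : (1:ℝ) ≤ k := by rw [hk]; linarith [Nat.cast_nonneg (α := ℝ) i]
      have hkN : k ≤ (N:ℝ) := by
        rw [hk]
        exact_mod_cast hiN
      have hθ : k * x ≤ 1 := by
        calc k * x ≤ (N:ℝ) * x := by nlinarith
          _ ≤ (1/x) * x := by nlinarith
          _ = 1 := by field_simp
      have hθ0 : 0 ≤ k * x := by positivity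
      have hcos : Real.cos (k * x) ≤ 1 - 2/Real.pi^2 * (k*x)^2 := by
        apply Real.cos_le_one_sub_mul_cos_sq
        rw [abs_of_nonneg hθ0]
        linarith [Real.pi_gt_three]
      have hpi2 : Real.pi ^ 2 ≤ 10 := by nlinarith [Real.pi_lt_d2, Real.pi_gt_three]
      have hnum : (2/5) * (k*x)^2 ≤ 2 - 2 * Real.cos (k * x) := by
        have h4 : 2/Real.pi^2 ≥ 2/10 := by
          apply div_le_div_of_nonneg_left (by norm_num) (by positivity) hpi2
        nlinarith [sq_nonneg (k*x), Real.pi_gt_three]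
      have hden : (1 + k^2) ^ ((3:ℝ)/2) ≤ 3 * k^3 := den_le k hk1
      have hfc : fc x ((i:ℤ)+1) = (2 - 2 * Real.cos (k * x)) / (1 + k^2) ^ ((3:ℝ)/2) := by
        unfold fc
        push_cast
        norm_num [hk]
      rw [hfc]
      calc (2/15) * x^2 * (1/k) = ((2/5) * (k*x)^2) / (3 * k^3) := by
            field_simp
            ring
        _ ≤ (2 - 2 * Real.cos (k * x)) / (1 + k^2) ^ ((3:ℝ)/2) :=
            div_le_div₀ (by nlinarith [Real.cos_le_one (k*x)]) hnum
              (Real.rpow_pos_of_pos (by positivity) _) hden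
    have hharm_lb : Real.log (1/x) ≤ ∑ i ∈ Finset.range N, (1/((i:ℝ)+1)) := by
      rw [← hharm_eq]
      calc Real.log (1/x) ≤ Real.log ((N:ℝ)+1) := by
            apply Real.log_le_log (by positivity) (le_of_lt hNgt)
        _ ≤ ((harmonic N : ℚ) : ℝ) := by exact_mod_cast log_add_one_le_harmonic N
    have hsum : (2/15) * x^2 * Real.log (1/x) ≤ ∑ i ∈ Finset.range N, fc x ((i:ℤ)+1) := by
      calc (2/15) * x^2 * Real.log (1/x)
          ≤ (2/15) * x^2 * ∑ i ∈ Finset.range N, (1/((i:ℝ)+1)) := by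
            apply mul_le_mul_of_nonneg_left hharm_lb (by positivity)
        _ = ∑ i ∈ Finset.range N, (2/15) * x^2 * (1/((i:ℝ)+1)) := by
            rw [Finset.mul_sum]
        _ ≤ _ := Finset.sum_le_sum hterm
    have hT0 : 0 ≤ ∑' n : ℕ, fc x ((n:ℤ)+1) := tsum_nonneg fun n => fc_nonneg _ _
    linarith
  · -- upper bound
    have hsplit : ∑' n : ℕ, fc x ((n:ℤ)+1)
        = ∑ i ∈ Finset.range N, fc x ((i:ℤ)+1) + ∑' n : ℕ, fc x (((n+N:ℕ):ℤ)+1) :=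
      (Summable.sum_add_tsum_nat_add (f := fun n : ℕ => fc x ((n:ℤ)+1)) N (fc_summable_shift x 1)).symm
    have hpartA : ∑ i ∈ Finset.range N, fc x ((i:ℤ)+1) ≤ 2 * x^2 * Real.log (1/x) := by
      have hterm : ∀ i ∈ Finset.range N, fc x ((i:ℤ)+1) ≤ x^2 * (1/((i:ℝ)+1)) := by
        intro i hi
        obtain ⟨k, hk⟩ : ∃ k : ℝ, k = (i:ℝ) + 1 := ⟨_, rfl⟩
        rw [← hk]
        have hk1 : (1:ℝ) ≤ k := by rw [hk]; linarith [Nat.cast_nonneg (α := ℝ) i]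
        have hnum : 2 - 2 * Real.cos (k * x) ≤ (k*x)^2 := by
          have h := Real.one_sub_sq_div_two_le_cos (x := k*x)
          nlinarith [h]
        have hden : k^3 ≤ (1 + k^2) ^ ((3:ℝ)/2) := den_ge_cube k (by positivity)
        have hfc : fc x ((i:ℤ)+1) = (2 - 2 * Real.cos (k * x)) / (1 + k^2) ^ ((3:ℝ)/2) := by
          unfold fc
          push_cast
          norm_num [hk]
        rw [hfc]
        calc (2 - 2 * Real.cos (k * x)) / (1 + k^2) ^ ((3:ℝ)/2) ≤ (k*x)^2 / k^3 := by
              apply div_le_div₀ (by positivity) hnum (by positivity) hden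
          _ = x^2 * (1/k) := by
              field_simp
      calc ∑ i ∈ Finset.range N, fc x ((i:ℤ)+1) ≤ ∑ i ∈ Finset.range N, x^2 * (1/((i:ℝ)+1)) :=
            Finset.sum_le_sum hterm
        _ = x^2 * ∑ i ∈ Finset.range N, (1/((i:ℝ)+1)) := by rw [Finset.mul_sum]
        _ ≤ x^2 * (1 + Real.log (1/x)) := by
            apply mul_le_mul_of_nonneg_left _ (by positivity)
            rw [← hharm_eq]
            calc ((harmonic N : ℚ) : ℝ) ≤ 1 + Real.log N := by
                  exact_mod_cast harmonic_le_one_add_log N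
              _ ≤ 1 + Real.log (1/x) := by
                  have := Real.log_le_log hNR hNle
                  linarith
        _ ≤ 2 * x^2 * Real.log (1/x) := by nlinarith [sq_nonneg x]
    have hpartB : ∑' n : ℕ, fc x (((n+N:ℕ):ℤ)+1) ≤ 16 * x^2 * Real.log (1/x) := by
      have hsummL : Summable (fun n : ℕ => fc x (((n+N:ℕ):ℤ)+1)) := by
        have := (summable_nat_add_iff (f := fun n : ℕ => fc x ((n:ℤ)+1)) N).mpr
          (fc_summable_shift x 1)
        exact this
      have htel := telescope_hasSum N hNpos
      have hsummR : Summable (fun n : ℕ => (4/(N:ℝ)) * (1 / (((n:ℝ) + N) * ((n:ℝ) + N + 1)))) :=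
        htel.summable.mul_left _
      have hterm : ∀ n : ℕ, fc x (((n+N:ℕ):ℤ)+1)
          ≤ (4/(N:ℝ)) * (1 / (((n:ℝ) + N) * ((n:ℝ) + N + 1))) := by
        intro n
        obtain ⟨m, hm⟩ : ∃ m : ℝ, m = (n:ℝ) + N + 1 := ⟨_, rfl⟩
        rw [show ((n:ℝ) + N) * ((n:ℝ) + N + 1) = (m - 1) * m by rw [hm]; ring]
        have hmN : (N:ℝ) + 1 ≤ m := by rw [hm]; linarith [Nat.cast_nonneg (α := ℝ) n]
        have hm1 : (1:ℝ) ≤ m := by linarith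
        have hnum : 2 - 2 * Real.cos (m * x) ≤ 4 := by
          nlinarith [Real.neg_one_le_cos (m * x)]
        have hden : m^3 ≤ (1 + m^2) ^ ((3:ℝ)/2) := den_ge_cube m (by positivity)
        have hfc : fc x (((n+N:ℕ):ℤ)+1) = (2 - 2 * Real.cos (m * x)) / (1 + m^2) ^ ((3:ℝ)/2) := by
          unfold fc
          push_cast
          norm_num [hm]
        rw [hfc]
        calc (2 - 2 * Real.cos (m * x)) / (1 + m^2) ^ ((3:ℝ)/2) ≤ 4 / m^3 :=
              div_le_div₀ (by norm_num) hnum (by positivity) hden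
          _ ≤ 4 / ((N:ℝ) * ((m - 1) * m)) := by
              have hm0 : (0:ℝ) < m := by linarith
              have hm2 : (0:ℝ) < m - 1 := by linarith
              have h2 : (N:ℝ) * (m - 1) ≤ m ^ 2 := by nlinarith
              exact div_le_div₀ (by norm_num) (le_refl 4)
                (mul_pos hNR (mul_pos hm2 hm0)) (by nlinarith)
          _ = (4/(N:ℝ)) * (1 / ((m - 1) * m)) := by
              rw [div_mul_div_comm, mul_one]
      calc ∑' n : ℕ, fc x (((n+N:ℕ):ℤ)+1)
          ≤ ∑' n : ℕ, (4/(N:ℝ)) * (1 / (((n:ℝ) + N) * ((n:ℝ) + N + 1))) :=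
            Summable.tsum_le_tsum hterm hsummL hsummR
        _ = (4/(N:ℝ)) * (1/(N:ℝ)) := by rw [tsum_mul_left, htel.tsum_eq]
        _ ≤ 16 * x^2 := by
            rw [div_mul_div_comm, mul_one, div_le_iff₀ (by positivity)]
            have h1 : 1 ≤ 2 * x * (N:ℝ) := by
              rw [div_le_iff₀ (by positivity)] at hNhalf
              linarith
            nlinarith
        _ ≤ 16 * x^2 * Real.log (1/x) := by nlinarith [sq_nonneg x]
    rw [hsplit]
    nlinarith [hpartA, hpartB]
end

section
/- Define a sequence N : ℕ → ℕ by N(0) = 0 and, for k ≥ 1, N(k) = the least integer N > N(k−1) such that Σ_{n=N(k−1)+1}^{N} n²/(1+n²)^{3/2} ≥ 1 (such N exists since the series Σ n²/(1+n²)^{3/2} diverges). Then there exist constants C₁, C₂ > 0 such that C₁·e^k ≤ N(k) ≤ C₂·e^k for all k ≥ 1. -/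
noncomputable def ff (n : ℕ) : ℝ := (n:ℝ)^2 / (1 + (n:ℝ)^2) ^ ((3:ℝ)/2)

lemma ff_nonneg (n : ℕ) : 0 ≤ ff n := by unfold ff; positivity

lemma rpow32_sq (x : ℝ) (hx : 0 ≤ x) : (x ^ ((3:ℝ)/2))^2 = x^3 := by
  rw [← Real.rpow_natCast (x ^ ((3:ℝ)/2)) 2, ← Real.rpow_mul hx,
    ← Real.rpow_natCast x 3]
  norm_num

lemma sq_rpow32 (x : ℝ) (hx : 0 ≤ x) : (x^2) ^ ((3:ℝ)/2) = x^3 := by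
  rw [← Real.rpow_natCast x 2, ← Real.rpow_mul hx, ← Real.rpow_natCast x 3]
  norm_num

lemma ff_le (n : ℕ) (hn : 1 ≤ n) : ff n ≤ 1/(n:ℝ) := by
  have hn' : (1:ℝ) ≤ (n:ℝ) := by exact_mod_cast hn
  have hnpos : (0:ℝ) < n := by linarith
  have hd : (0:ℝ) < (1 + (n:ℝ)^2) ^ ((3:ℝ)/2) := Real.rpow_pos_of_pos (by positivity) _
  unfold ff
  rw [div_le_div_iff₀ hd hnpos]
  have h1 : (n:ℝ)^3 = ((n:ℝ)^2) ^ ((3:ℝ)/2) := (sq_rpow32 _ (by positivity)).symm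
  have h2 : ((n:ℝ)^2) ^ ((3:ℝ)/2) ≤ (1 + (n:ℝ)^2) ^ ((3:ℝ)/2) :=
    Real.rpow_le_rpow (by positivity) (by linarith) (by norm_num)
  nlinarith

lemma ff_ge (n : ℕ) (hn : 1 ≤ n) : 1/(n:ℝ) - 2/(n:ℝ)^3 ≤ ff n := by
  have hn' : (1:ℝ) ≤ (n:ℝ) := by exact_mod_cast hn
  have hd : (0:ℝ) < (1 + (n:ℝ)^2) ^ ((3:ℝ)/2) := Real.rpow_pos_of_pos (by positivity) _
  have hkey : (1 + (n:ℝ)^2) ^ ((3:ℝ)/2) ≤ (n:ℝ)^3 + 2*(n:ℝ) := by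
    have hsq : ((1 + (n:ℝ)^2) ^ ((3:ℝ)/2))^2 = (1 + (n:ℝ)^2)^3 :=
      rpow32_sq _ (by positivity)
    have hcube : (1 + (n:ℝ)^2)^3 ≤ ((n:ℝ)^3 + 2*(n:ℝ))^2 := by nlinarith
    calc (1 + (n:ℝ)^2) ^ ((3:ℝ)/2)
        = Real.sqrt (((1 + (n:ℝ)^2) ^ ((3:ℝ)/2))^2) := (Real.sqrt_sq hd.le).symm
      _ ≤ Real.sqrt (((n:ℝ)^3 + 2*(n:ℝ))^2) := by
          apply Real.sqrt_le_sqrt; rw [hsq]; exact hcube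
      _ = (n:ℝ)^3 + 2*(n:ℝ) := Real.sqrt_sq (by positivity)
  have h1 : (n:ℝ)^2 / ((n:ℝ)^3 + 2*(n:ℝ)) ≤ ff n := by
    unfold ff
    apply div_le_div_of_nonneg_left (by positivity) hd hkey
  have h2 : 1/(n:ℝ) - 2/(n:ℝ)^3 ≤ (n:ℝ)^2 / ((n:ℝ)^3 + 2*(n:ℝ)) := by
    rw [div_sub_div _ _ (by positivity) (by positivity : ((n:ℝ)^3) ≠ 0),
      div_le_div_iff₀ (by positivity) (by positivity)]
    ring_nf
    nlinarith
  linarith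

lemma ff_le_one (n : ℕ) : ff n ≤ 1 := by
  rcases Nat.eq_zero_or_pos n with h | h
  · simp [ff, h]
  · have hn' : (1:ℝ) ≤ (n:ℝ) := by exact_mod_cast h
    have : 1/(n:ℝ) ≤ 1 := by rw [div_le_one (by linarith)]; exact hn'
    linarith [ff_le n h]

lemma log_le_harmonic (M : ℕ) :
    Real.log ((M:ℝ)+1) ≤ ∑ n ∈ Finset.Icc 1 M, 1/(n:ℝ) := by
  induction M with
  | zero => simp
  | succ M ih =>
    rw [Finset.sum_Icc_succ_top (by omega : 1 ≤ M+1)]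
    have hpos : (0:ℝ) < (M:ℝ)+1 := by positivity
    have h1 : Real.log (((M:ℝ)+1+1)/((M:ℝ)+1)) ≤ ((M:ℝ)+1+1)/((M:ℝ)+1) - 1 :=
      Real.log_le_sub_one_of_pos (by positivity)
    have h2 : ((M:ℝ)+1+1)/((M:ℝ)+1) - 1 = 1/((M:ℝ)+1) := by field_simp; ring
    rw [Real.log_div (by positivity) (by positivity)] at h1
    push_cast
    linarith

lemma harmonic_le (M : ℕ) (hM : 1 ≤ M) :
    ∑ n ∈ Finset.Icc 1 M, 1/(n:ℝ) ≤ 1 + Real.log M := by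
  induction M, hM using Nat.le_induction with
  | base => simp
  | succ M hM ih =>
    rw [Finset.sum_Icc_succ_top (by omega : 1 ≤ M+1)]
    have hpos : (0:ℝ) < (M:ℝ) := by exact_mod_cast hM
    have h1 : Real.log (((M:ℝ))/((M:ℝ)+1)) ≤ ((M:ℝ))/((M:ℝ)+1) - 1 :=
      Real.log_le_sub_one_of_pos (by positivity)
    have h2 : ((M:ℝ))/((M:ℝ)+1) - 1 = -(1/((M:ℝ)+1)) := by field_simp; ring
    rw [Real.log_div (by positivity) (by positivity)] at h1
    push_cast
    linarith

lemma sqsum_le (M : ℕ) (hM : 1 ≤ M) :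
    ∑ n ∈ Finset.Icc 1 M, 1/(n:ℝ)^2 ≤ 2 - 1/(M:ℝ) := by
  induction M, hM using Nat.le_induction with
  | base => norm_num
  | succ M hM ih =>
    rw [Finset.sum_Icc_succ_top (by omega : 1 ≤ M+1)]
    have hpos : (0:ℝ) < (M:ℝ) := by exact_mod_cast hM
    have key : 1/((M:ℝ)+1)^2 ≤ 1/(M:ℝ) - 1/((M:ℝ)+1) := by
      rw [div_sub_div _ _ (by positivity) (by positivity : ((M:ℝ)+1) ≠ 0)]
      rw [div_le_div_iff₀ (by positivity) (by positivity)]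
      ring_nf
      nlinarith
    push_cast
    linarith

lemma cubesum_le (M : ℕ) : ∑ n ∈ Finset.Icc 1 M, 2/(n:ℝ)^3 ≤ 4 := by
  rcases Nat.eq_zero_or_pos M with h | h
  · simp [h]
  have h1 : ∑ n ∈ Finset.Icc 1 M, 2/(n:ℝ)^3 ≤ ∑ n ∈ Finset.Icc 1 M, 2/(n:ℝ)^2 := by
    apply Finset.sum_le_sum
    intro n hn
    have hn1 : 1 ≤ n := (Finset.mem_Icc.mp hn).1
    have hn' : (1:ℝ) ≤ (n:ℝ) := by exact_mod_cast hn1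
    apply div_le_div_of_nonneg_left (by norm_num) (by positivity)
    nlinarith
  have h2 := sqsum_le M h
  have : ∑ n ∈ Finset.Icc 1 M, 2/(n:ℝ)^2 = 2 * ∑ n ∈ Finset.Icc 1 M, 1/(n:ℝ)^2 := by
    rw [Finset.mul_sum]; congr 1; ext n; ring
  rw [this] at h1
  have h4 : 0 < 1/(M:ℝ) := by positivity
  linarith

lemma geomsum_le (k : ℕ) : ∑ j ∈ Finset.Icc 1 k, ((1:ℝ)/2)^j ≤ 1 := by
  have key : ∀ m : ℕ, ∑ j ∈ Finset.Icc 1 m, ((1:ℝ)/2)^j ≤ 1 - (1/2)^m := by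
    intro m
    induction m with
    | zero => simp
    | succ m ih =>
      rw [Finset.sum_Icc_succ_top (by omega : 1 ≤ m+1), pow_succ]
      have : (0:ℝ) < (1/2)^m := by positivity
      linarith
  have := key k
  have : (0:ℝ) < (1/2)^k := by positivity
  linarith [key k]

/-- Block decomposition growth: let `N : ℕ → ℕ` satisfy `N 0 = 0` and, for `k ≥ 1`,
`N k` is the least integer `> N (k-1)` such that
`Σ_{n = N(k-1)+1}^{N k} n²/(1+n²)^{3/2} ≥ 1`. Then there exist `C₁, C₂ > 0` with
`C₁ e^k ≤ N k ≤ C₂ e^k` for all `k ≥ 1`. -/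
theorem block_sequence_exponential_growth (N : ℕ → ℕ) (hN0 : N 0 = 0)
    (hN : ∀ k : ℕ, 1 ≤ k →
      N (k - 1) < N k ∧
      1 ≤ (∑ n ∈ Finset.Icc (N (k - 1) + 1) (N k),
            (n : ℝ) ^ 2 / (1 + (n : ℝ) ^ 2) ^ ((3 : ℝ) / 2)) ∧
      ∀ m : ℕ, N (k - 1) < m → m < N k →
        (∑ n ∈ Finset.Icc (N (k - 1) + 1) m,
            (n : ℝ) ^ 2 / (1 + (n : ℝ) ^ 2) ^ ((3 : ℝ) / 2)) < 1) :
    ∃ C₁ C₂ : ℝ, 0 < C₁ ∧ 0 < C₂ ∧ ∀ k : ℕ, 1 ≤ k →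
      C₁ * Real.exp k ≤ (N k : ℝ) ∧ (N k : ℝ) ≤ C₂ * Real.exp k := by
  -- rephrase hN in terms of ff
  have hN' : ∀ k : ℕ, 1 ≤ k →
      N (k - 1) < N k ∧
      1 ≤ (∑ n ∈ Finset.Icc (N (k - 1) + 1) (N k), ff n) ∧
      ∀ m : ℕ, N (k - 1) < m → m < N k →
        (∑ n ∈ Finset.Icc (N (k - 1) + 1) m, ff n) < 1 := hN
  clear hN
  -- monotonicity
  have hmono : ∀ k : ℕ, N k < N (k+1) := by
    intro k
    have := (hN' (k+1) (by omega)).1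
    simpa using this
  have hNge : ∀ k : ℕ, k ≤ N k := by
    intro k
    induction k with
    | zero => omega
    | succ k ih => have := hmono k; omega
  -- telescoping
  have hTtel : ∀ k : ℕ,
      (∑ n ∈ Finset.Icc 1 (N k), ff n)
        = ∑ j ∈ Finset.Icc 1 k, ∑ n ∈ Finset.Icc (N (j-1) + 1) (N j), ff n := by
    intro k
    induction k with
    | zero => simp [hN0]
    | succ k ih =>
      rw [Finset.sum_Icc_succ_top (by omega : 1 ≤ k+1), ← ih]
      simp only [Nat.add_sub_cancel]
      have e1 : ∀ m : ℕ, Finset.Icc 1 m = Finset.Ioc 0 m := fun m => Finset.Icc_add_one_left_eq_Ioc 0 m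
      rw [e1, e1, Finset.Icc_add_one_left_eq_Ioc (N k)]
      exact (Finset.sum_Ioc_consecutive _ (Nat.zero_le _) (hmono k).le).symm
  -- lower bound: exp (k-1) ≤ N k
  have hNlow : ∀ k : ℕ, 1 ≤ k → Real.exp ((k:ℝ) - 1) ≤ (N k : ℝ) := by
    intro k hk
    have hNk1 : 1 ≤ N k := le_trans hk (hNge k)
    have hTk : (k:ℝ) ≤ ∑ n ∈ Finset.Icc 1 (N k), ff n := by
      rw [hTtel k]
      calc (k:ℝ) = ∑ j ∈ Finset.Icc 1 k, (1:ℝ) := by simp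
        _ ≤ _ := Finset.sum_le_sum (fun j hj => (hN' j (Finset.mem_Icc.mp hj).1).2.1)
    have hT_le : ∑ n ∈ Finset.Icc 1 (N k), ff n ≤ 1 + Real.log (N k) := by
      calc ∑ n ∈ Finset.Icc 1 (N k), ff n
          ≤ ∑ n ∈ Finset.Icc 1 (N k), 1/(n:ℝ) :=
            Finset.sum_le_sum (fun n hn => ff_le n (Finset.mem_Icc.mp hn).1)
        _ ≤ 1 + Real.log (N k) := harmonic_le _ hNk1
    have hlog : (k:ℝ) - 1 ≤ Real.log (N k) := by linarith
    have hNpos : (0:ℝ) < (N k : ℝ) := by exact_mod_cast hNk1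
    calc Real.exp ((k:ℝ) - 1) ≤ Real.exp (Real.log (N k)) := Real.exp_le_exp.mpr hlog
      _ = (N k : ℝ) := Real.exp_log hNpos
  refine ⟨Real.exp (-1), Real.exp 7, Real.exp_pos _, Real.exp_pos _, fun k hk => ?_⟩
  constructor
  · rw [← Real.exp_add]
    have : (-1 : ℝ) + (k:ℝ) = (k:ℝ) - 1 := by ring
    rw [this]
    exact hNlow k hk
  -- upper bound
  · have hNk1 : 1 ≤ N k := le_trans hk (hNge k)
    -- each block sum is at most 1 + ff (N j) ≤ 1 + e * (1/2)^j
    have hblock : ∀ j : ℕ, 1 ≤ j →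
        (∑ n ∈ Finset.Icc (N (j-1) + 1) (N j), ff n) ≤ 1 + Real.exp 1 * ((1:ℝ)/2)^j := by
      intro j hj
      have hab : N (j-1) < N j := (hN' j hj).1
      obtain ⟨b, hb⟩ : ∃ b, N j = b + 1 := ⟨N j - 1, by omega⟩
      have hpart : (∑ n ∈ Finset.Icc (N (j-1) + 1) b, ff n) < 1 := by
        rcases Nat.lt_or_ge (N (j-1)) b with h | h
        · exact (hN' j hj).2.2 b h (by omega)
        · have : Finset.Icc (N (j-1) + 1) b = ∅ := by
            apply Finset.Icc_eq_empty; omega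
          rw [this]; norm_num
      have hsplit : (∑ n ∈ Finset.Icc (N (j-1) + 1) (N j), ff n)
          = (∑ n ∈ Finset.Icc (N (j-1) + 1) b, ff n) + ff (b+1) := by
        rw [hb]
        exact Finset.sum_Icc_succ_top (by omega) _
      -- ff (N j) ≤ exp 1 * (1/2)^j
      have hNj : Real.exp ((j:ℝ) - 1) ≤ (N j : ℝ) := hNlow j hj
      have hNjpos : (0:ℝ) < (N j : ℝ) := by
        have := le_trans hj (hNge j); exact_mod_cast this
      have hffNj : ff (N j) ≤ Real.exp 1 * ((1:ℝ)/2)^j := by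
        have h1 : ff (N j) ≤ 1/(N j : ℝ) := ff_le _ (le_trans hj (hNge j))
        have h2 : 1/(N j : ℝ) ≤ 1/Real.exp ((j:ℝ) - 1) :=
          one_div_le_one_div_of_le (Real.exp_pos _) hNj
        have h3 : 1/Real.exp ((j:ℝ) - 1) = Real.exp 1 / Real.exp (j:ℝ) := by
          rw [Real.exp_sub]
          field_simp
        have h4 : (2:ℝ)^j ≤ Real.exp (j:ℝ) := by
          rw [show Real.exp (j:ℝ) = Real.exp 1 ^ j from (Real.exp_one_pow j).symm]
          apply pow_le_pow_left₀ (by norm_num)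
          linarith [Real.exp_one_gt_d9]
        have h5 : Real.exp 1 / Real.exp (j:ℝ) ≤ Real.exp 1 / (2:ℝ)^j :=
          div_le_div_of_nonneg_left (Real.exp_pos 1).le (by positivity) h4
        have h6 : Real.exp 1 / (2:ℝ)^j = Real.exp 1 * ((1:ℝ)/2)^j := by
          rw [div_pow]
          ring
        linarith
      have := ff_nonneg (b+1)
      rw [hsplit, ← hb]
      rw [hb] at hffNj ⊢
      linarith
    -- sum up
    have hT_up : (∑ n ∈ Finset.Icc 1 (N k), ff n) ≤ (k:ℝ) + 3 := by
      rw [hTtel k]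
      have : (∑ j ∈ Finset.Icc 1 k, ∑ n ∈ Finset.Icc (N (j-1) + 1) (N j), ff n)
          ≤ ∑ j ∈ Finset.Icc 1 k, (1 + Real.exp 1 * ((1:ℝ)/2)^j) :=
        Finset.sum_le_sum (fun j hj => hblock j (Finset.mem_Icc.mp hj).1)
      have hsum : ∑ j ∈ Finset.Icc 1 k, (1 + Real.exp 1 * ((1:ℝ)/2)^j)
          = (k:ℝ) + Real.exp 1 * ∑ j ∈ Finset.Icc 1 k, ((1:ℝ)/2)^j := by
        rw [Finset.sum_add_distrib, ← Finset.mul_sum]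
        simp
      have hgeo := geomsum_le k
      have hexp : Real.exp 1 ≤ 3 := by
        linarith [Real.exp_one_lt_d9]
      have hgnn : (0:ℝ) ≤ ∑ j ∈ Finset.Icc 1 k, ((1:ℝ)/2)^j :=
        Finset.sum_nonneg (fun j _ => by positivity)
      have : Real.exp 1 * ∑ j ∈ Finset.Icc 1 k, ((1:ℝ)/2)^j ≤ 3 := by
        calc Real.exp 1 * ∑ j ∈ Finset.Icc 1 k, ((1:ℝ)/2)^j
            ≤ 3 * ∑ j ∈ Finset.Icc 1 k, ((1:ℝ)/2)^j := by
              apply mul_le_mul_of_nonneg_right hexp hgnn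
          _ ≤ 3 * 1 := by linarith
          _ = 3 := by norm_num
      linarith
    -- harmonic ≤ T + 4
    have hharm : (∑ n ∈ Finset.Icc 1 (N k), 1/(n:ℝ))
        ≤ (∑ n ∈ Finset.Icc 1 (N k), ff n) + 4 := by
      have h1 : (∑ n ∈ Finset.Icc 1 (N k), 1/(n:ℝ))
          ≤ ∑ n ∈ Finset.Icc 1 (N k), (ff n + 2/(n:ℝ)^3) := by
        apply Finset.sum_le_sum
        intro n hn
        have := ff_ge n (Finset.mem_Icc.mp hn).1
        linarith
      rw [Finset.sum_add_distrib] at h1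
      linarith [cubesum_le (N k)]
    have hloglow := log_le_harmonic (N k)
    have hlog_up : Real.log ((N k : ℝ)+1) ≤ (k:ℝ) + 7 := by linarith
    have hNp1pos : (0:ℝ) < (N k : ℝ) + 1 := by positivity
    have : (N k : ℝ) + 1 = Real.exp (Real.log ((N k : ℝ)+1)) := (Real.exp_log hNp1pos).symm
    have hfin : (N k : ℝ) + 1 ≤ Real.exp ((k:ℝ) + 7) := by
      rw [this]; exact Real.exp_le_exp.mpr hlog_up
    have : Real.exp ((k:ℝ) + 7) = Real.exp 7 * Real.exp k := by
      rw [← Real.exp_add]; ring_nf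
    linarith [hfin, this ▸ hfin]
end
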